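/- arXiv:1407.1900 — 7 statements merged into one kernel-verified Lean document; each statement's English description precedes it below -/
import Mathlib

section
/- Let c > 0 and let u : ℝ × ℝ → ℝ be twice continuously differentiable and satisfy the one-dimensional wave equation ∂ₜ∂ₜu(t,x) = c²·∂ₓ∂ₓu(t,x) for all (t,x) ∈ ℝ × ℝ, and suppose that the functions x ↦ u(0,x) and x ↦ ∂ₜu(0,x) belong to the Schwartz space 𝓢(ℝ, ℝ). Then for every v ∈ ℝ with |v| ≠ c, every x₀ ∈ ℝ and every non-negative integer l there is a constant C > 0 such that |∂ₜu(t, x₀ + v·t)|² + c²·|∂ₓu(t, x₀ + v·t)|² ≤ C·t^(−2l) for all t > 0. -/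
open MeasureTheory Real

private lemma schwartz_sq_ray_decay (g : SchwartzMap ℝ ℝ) (k x₀ : ℝ) (hk : k ≠ 0)
    (l : ℕ) : ∃ C > 0, ∀ t > (0:ℝ), |g (x₀ + k * t)| ^ 2 ≤ C * t ^ (-(2 * l : ℝ)) := by
  obtain ⟨C₁, hC₁pos, hC₁⟩ := g.decay l 0
  obtain ⟨C₀, hC₀pos, hC₀⟩ := g.decay 0 0
  have hb₁ : ∀ y : ℝ, |y| ^ l * |g y| ≤ C₁ := by
    intro y
    have := hC₁ y
    simpa [norm_iteratedFDeriv_zero, Real.norm_eq_abs] using this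
  have hb₀ : ∀ y : ℝ, |g y| ≤ C₀ := by
    intro y
    have := hC₀ y
    simpa [norm_iteratedFDeriv_zero, Real.norm_eq_abs] using this
  have hkpos : 0 < |k| := abs_pos.mpr hk
  set T : ℝ := (2 * |x₀| + 1) / |k| with hT
  have hTpos : 0 < T := by positivity
  set M : ℝ := max (C₁ * (2 / |k|) ^ l) (C₀ * (max T 1) ^ l) with hM
  have hMpos : 0 < M := lt_of_lt_of_le (by positivity) (le_max_left _ _)
  have key : ∀ t > (0:ℝ), |g (x₀ + k * t)| ≤ M * (t ^ l)⁻¹ := by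
    intro t ht
    rcases le_or_gt T t with hTt | htT
    · -- far regime
      have h1 : 2 * |x₀| + 1 ≤ |k| * t := by
        have := (div_le_iff₀ hkpos).mp hTt
        linarith [this]
      have h2 : |k| * t / 2 ≤ |x₀ + k * t| := by
        have h3 : |k * t| - |x₀| ≤ |x₀ + k * t| := by
          have := abs_sub_abs_le_abs_sub (k * t) (-x₀)
          rw [sub_neg_eq_add] at this
          simpa [add_comm, abs_neg] using this
        have h4 : |k * t| = |k| * t := by rw [abs_mul, abs_of_pos ht]
        nlinarith
      have hy : 0 < |x₀ + k * t| := lt_of_lt_of_le (by positivity) h2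
      have h5 : |g (x₀ + k * t)| ≤ C₁ / |x₀ + k * t| ^ l := by
        rw [le_div_iff₀ (by positivity)]
        calc |g (x₀ + k * t)| * |x₀ + k * t| ^ l
            = |x₀ + k * t| ^ l * |g (x₀ + k * t)| := by ring
          _ ≤ C₁ := hb₁ _
      have h6 : C₁ / |x₀ + k * t| ^ l ≤ C₁ / (|k| * t / 2) ^ l := by
        apply div_le_div_of_nonneg_left hC₁pos.le (by positivity)
        exact pow_le_pow_left₀ (by positivity) h2 l
      have h7 : C₁ / (|k| * t / 2) ^ l = C₁ * (2 / |k|) ^ l * (t ^ l)⁻¹ := by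
        rw [div_pow, div_pow, mul_pow]
        field_simp
      calc |g (x₀ + k * t)| ≤ C₁ / (|k| * t / 2) ^ l := h5.trans h6
        _ = C₁ * (2 / |k|) ^ l * (t ^ l)⁻¹ := h7
        _ ≤ M * (t ^ l)⁻¹ := by
            apply mul_le_mul_of_nonneg_right (le_max_left _ _) (by positivity)
    · -- near regime
      have ht1 : t ≤ max T 1 := le_trans htT.le (le_max_left _ _)
      have h8 : t ^ l ≤ (max T 1) ^ l := pow_le_pow_left₀ ht.le ht1 l
      have h9 : (1:ℝ) ≤ (max T 1) ^ l * (t ^ l)⁻¹ := by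
        rw [← div_eq_mul_inv, le_div_iff₀ (by positivity)]
        simpa using h8
      calc |g (x₀ + k * t)| ≤ C₀ := hb₀ _
        _ = C₀ * 1 := by ring
        _ ≤ C₀ * ((max T 1) ^ l * (t ^ l)⁻¹) := by
            apply mul_le_mul_of_nonneg_left h9 hC₀pos.le
        _ = C₀ * (max T 1) ^ l * (t ^ l)⁻¹ := by ring
        _ ≤ M * (t ^ l)⁻¹ := by
            apply mul_le_mul_of_nonneg_right (le_max_right _ _) (by positivity)
  refine ⟨M ^ 2, by positivity, fun t ht => ?_⟩
  have hrp : t ^ (-(2 * l : ℝ)) = ((t ^ l)⁻¹) ^ 2 := by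
    rw [show (-(2 * l : ℝ)) = (-(l:ℝ)) * 2 by ring, Real.rpow_mul ht.le,
      Real.rpow_neg ht.le, Real.rpow_natCast]
    norm_num [Real.rpow_two]
  rw [hrp]
  have := key t ht
  have habs : (0:ℝ) ≤ |g (x₀ + k * t)| := abs_nonneg _
  nlinarith [key t ht]


set_option maxHeartbeats 1000000 in
/-- Decay of the energy density of a solution of the 1-D wave
equation along any ray `x = x₀ + v t` with speed `|v| ≠ c`, assuming Schwartz
initial data. -/
theorem wave_equation_decay_along_noncharacteristic_rays
    (c : ℝ) (hc : 0 < c) (u : ℝ × ℝ → ℝ) (hu : ContDiff ℝ 2 u)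
    (hwave : ∀ t x : ℝ,
      deriv (fun s => deriv (fun s' => u (s', x)) s) t
        = c ^ 2 * deriv (fun y => deriv (fun y' => u (t, y')) y) x)
    (f₀ f₁ : SchwartzMap ℝ ℝ)
    (h₀ : ∀ x : ℝ, u (0, x) = f₀ x)
    (h₁ : ∀ x : ℝ, deriv (fun s => u (s, x)) 0 = f₁ x) :
    ∀ v : ℝ, |v| ≠ c → ∀ x₀ : ℝ, ∀ l : ℕ, ∃ C > 0, ∀ t > (0 : ℝ),
      |deriv (fun s => u (s, x₀ + v * t)) t| ^ 2
        + c ^ 2 * |deriv (fun y => u (t, y)) (x₀ + v * t)| ^ 2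
        ≤ C * t ^ (-(2 * l : ℝ)) := by
  set f := fderiv ℝ u with hf
  set g := fderiv ℝ f with hg
  have hud : Differentiable ℝ u := hu.differentiable two_ne_zero
  have hu1 : ContDiff ℝ 1 f := hu.fderiv_right (le_refl 2)
  have hfd : Differentiable ℝ f := hu1.differentiable one_ne_zero
  -- derivative of the evaluated fderiv
  have hP : ∀ (p : ℝ × ℝ) (w : ℝ × ℝ), HasFDerivAt (fun q => f q w)
      ((ContinuousLinearMap.apply ℝ ℝ w).comp (g p)) p := fun p w =>
    (ContinuousLinearMap.apply ℝ ℝ w).hasFDerivAt.comp p (hfd p).hasFDerivAt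
  -- curve derivatives
  have hcurveT : ∀ (x t : ℝ), HasDerivAt (fun s : ℝ => ((s, x) : ℝ × ℝ)) (1, 0) t :=
    fun x t => (hasDerivAt_id t).prodMk (hasDerivAt_const t x)
  have hcurveX : ∀ (t x : ℝ), HasDerivAt (fun y : ℝ => ((t, y) : ℝ × ℝ)) (0, 1) x :=
    fun t x => (hasDerivAt_const x t).prodMk (hasDerivAt_id x)
  have hPt : ∀ t x : ℝ, deriv (fun s => u (s, x)) t = f (t, x) (1, 0) := fun t x =>
    ((hud (t, x)).hasFDerivAt.comp_hasDerivAt t (hcurveT x t)).deriv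
  have hQx : ∀ t x : ℝ, deriv (fun y => u (t, y)) x = f (t, x) (0, 1) := fun t x =>
    ((hud (t, x)).hasFDerivAt.comp_hasDerivAt x (hcurveX t x)).deriv
  -- the wave equation in terms of the second fderiv
  have hsnd : ∀ t x : ℝ, g (t, x) (1, 0) (1, 0) = c ^ 2 * g (t, x) (0, 1) (0, 1) := by
    intro t x
    have hL : deriv (fun s => deriv (fun s' => u (s', x)) s) t = g (t, x) (1, 0) (1, 0) := by
      have he : (fun s => deriv (fun s' => u (s', x)) s) = fun s => f (s, x) (1, 0) := by
        funext s; exact hPt s x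
      rw [he]
      exact ((hP (t, x) (1, 0)).comp_hasDerivAt t (hcurveT x t)).deriv
    have hR : deriv (fun y => deriv (fun y' => u (t, y')) y) x = g (t, x) (0, 1) (0, 1) := by
      have he : (fun y => deriv (fun y' => u (t, y')) y) = fun y => f (t, y) (0, 1) := by
        funext y; exact hQx t y
      rw [he]
      exact ((hP (t, x) (0, 1)).comp_hasDerivAt x (hcurveX t x)).deriv
    rw [← hL, ← hR]; exact hwave t x
  -- symmetry of the second derivative
  have hsymm : ∀ (p : ℝ × ℝ) (w₁ w₂ : ℝ × ℝ), g p w₁ w₂ = g p w₂ w₁ := fun p w₁ w₂ =>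
    second_derivative_symmetric (fun q => (hud q).hasFDerivAt) (hfd p).hasFDerivAt w₁ w₂
  -- expansion of g p (1, ±c)
  have hexp : ∀ (p : ℝ × ℝ) (e : ℝ) (w : ℝ × ℝ), g p (1, e) w = g p (1, 0) w + e * g p (0, 1) w := by
    intro p e w
    have : ((1 : ℝ), e) = (1, 0) + e • ((0 : ℝ), (1 : ℝ)) := by
      simp [Prod.ext_iff]
    rw [this, map_add, _root_.map_smul]
    simp
  -- transport along characteristics
  have htrans : ∀ (ε : ℝ), ε = 1 ∨ ε = -1 → ∀ t x : ℝ,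
      f (t, x) (1, 0) + ε * c * f (t, x) (0, 1)
        = f (0, x + ε * c * t) (1, 0) + ε * c * f (0, x + ε * c * t) (0, 1) := by
    intro ε hε t x
    set φ : ℝ → ℝ := fun s =>
      f (s, x + ε * c * t - ε * c * s) (1, 0) + ε * c * f (s, x + ε * c * t - ε * c * s) (0, 1)
      with hφdef
    have hγ : ∀ s : ℝ, HasDerivAt (fun s' : ℝ => ((s', x + ε * c * t - ε * c * s') : ℝ × ℝ))
        (1, -(ε * c)) s := by
      intro s
      refine (hasDerivAt_id s).prodMk ?_
      simpa using ((hasDerivAt_id s).const_mul (ε * c)).const_sub (x + ε * c * t)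
    have hφ : ∀ s : ℝ, HasDerivAt φ 0 s := by
      intro s
      set p : ℝ × ℝ := (s, x + ε * c * t - ε * c * s) with hp
      have h1 : HasDerivAt (fun s' : ℝ => f (s', x + ε * c * t - ε * c * s') (1, 0))
          (g p (1, -(ε * c)) (1, 0)) s := by
        have := (hP p (1, 0)).comp_hasDerivAt s (hγ s); exact this
      have h2 : HasDerivAt (fun s' : ℝ => f (s', x + ε * c * t - ε * c * s') (0, 1))
          (g p (1, -(ε * c)) (0, 1)) s := by
        have := (hP p (0, 1)).comp_hasDerivAt s (hγ s); exact this
      have htot := h1.add (h2.const_mul (ε * c))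
      have hzero : g p (1, -(ε * c)) (1, 0) + ε * c * g p (1, -(ε * c)) (0, 1) = 0 := by
        rw [hexp p (-(ε * c)) (1, 0), hexp p (-(ε * c)) (0, 1)]
        have hs := hsymm p (0, 1) (1, 0)
        have hw := hsnd s (x + ε * c * t - ε * c * s)
        have hw' : g p (1, 0) (1, 0) = c ^ 2 * g p (0, 1) (0, 1) := hw
        have hε2 : ε ^ 2 = 1 := by rcases hε with h | h <;> rw [h] <;> norm_num
        linear_combination hw' - (ε * c) * hs - (c ^ 2 * (g p (0, 1) (0, 1))) * hε2
      rw [hzero] at htot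
      exact htot
    have hconst : φ t = φ 0 :=
      is_const_of_deriv_eq_zero (fun s => (hφ s).differentiableAt)
        (fun s => (hφ s).deriv) t 0
    have e1 : x + ε * c * t - ε * c * t = x := by ring
    have e2 : x + ε * c * t - ε * c * 0 = x + ε * c * t := by ring
    simpa [hφdef, e1, e2] using hconst
  -- initial data
  have hP0 : ∀ y : ℝ, f (0, y) (1, 0) = f₁ y := fun y => by rw [← hPt 0 y, h₁ y]
  have hQ0 : ∀ y : ℝ, f (0, y) (0, 1) = deriv f₀ y := by
    intro y
    rw [← hQx 0 y]
    congr 1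
    funext y'
    exact h₀ y'
  set gA : SchwartzMap ℝ ℝ := f₁ + c • SchwartzMap.derivCLM ℝ ℝ f₀ with hgA
  set gB : SchwartzMap ℝ ℝ := f₁ - c • SchwartzMap.derivCLM ℝ ℝ f₀ with hgB
  have hgAa : ∀ y : ℝ, gA y = f₁ y + c * deriv f₀ y := by
    intro y
    simp [hgA, SchwartzMap.derivCLM_apply]
  have hgBa : ∀ y : ℝ, gB y = f₁ y - c * deriv f₀ y := by
    intro y
    simp [hgB, SchwartzMap.derivCLM_apply]
  intro v hv x₀ l
  have hk₁ : v + c ≠ 0 := by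
    intro h
    apply hv
    have : v = -c := by linarith
    rw [this, abs_neg, abs_of_pos hc]
  have hk₂ : v - c ≠ 0 := by
    intro h
    apply hv
    have : v = c := by linarith
    rw [this, abs_of_pos hc]
  obtain ⟨CA, hCA0, hCA⟩ := schwartz_sq_ray_decay gA (v + c) x₀ hk₁ l
  obtain ⟨CB, hCB0, hCB⟩ := schwartz_sq_ray_decay gB (v - c) x₀ hk₂ l
  refine ⟨(CA + CB) / 2, by positivity, fun t ht => ?_⟩
  set x : ℝ := x₀ + v * t with hx
  have hA := htrans 1 (Or.inl rfl) t x
  have hB := htrans (-1) (Or.inr rfl) t x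
  have eA : x + 1 * c * t = x₀ + (v + c) * t := by rw [hx]; ring
  have eB : x + (-1) * c * t = x₀ + (v - c) * t := by rw [hx]; ring
  rw [eA] at hA
  rw [eB] at hB
  have hA' : f (t, x) (1, 0) + c * f (t, x) (0, 1) = gA (x₀ + (v + c) * t) := by
    rw [hgAa, ← hP0, ← hQ0]
    linarith [hA]
  have hB' : f (t, x) (1, 0) - c * f (t, x) (0, 1) = gB (x₀ + (v - c) * t) := by
    rw [hgBa, ← hP0, ← hQ0]
    linarith [hB]
  have hboundA := hCA t ht
  have hboundB := hCB t ht
  rw [hPt t x, hQx t x, sq_abs, sq_abs]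
  rw [sq_abs] at hboundA hboundB
  have e3 : f (t, x) (1, 0) ^ 2 + c ^ 2 * f (t, x) (0, 1) ^ 2
      = (gA (x₀ + (v + c) * t) ^ 2 + gB (x₀ + (v - c) * t) ^ 2) / 2 := by
    rw [← hA', ← hB']; ring
  linarith [hboundA, hboundB, e3]
end

section
/- Let J : ℝ → ℝ be integrable, real-valued and even, and set μ₀ = ∫ J(x) dx. Suppose u : ℝ → L²(ℝ, ℂ) is twice continuously differentiable and satisfies u''(t) + μ₀·u(t) = J ⋆ u(t) for all t ∈ ℝ. Then the energy E(t) = ‖u'(t)‖² + μ₀·‖u(t)‖² − ⟪J ⋆ u(t), u(t)⟫ is constant in t, where ‖·‖ and ⟪·,·⟫ denote the L² norm and inner product. -/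
open MeasureTheory

open MeasureTheory Filter Complex
open scoped ENNReal ComplexConjugate

noncomputable section PeriAux

local notation "⟪" x ", " y "⟫" => @inner ℂ _ _ x y

namespace PeriAux

abbrev H : Type := Lp ℂ 2 (volume : Measure ℝ)

def tau (y : ℝ) : H →ₗᵢ[ℂ] H :=
  Lp.compMeasurePreservingₗᵢ ℂ (fun x => x - y) (measurePreserving_sub_right volume y)

lemma tau_coeFn (y : ℝ) (v : H) : (tau y v : ℝ → ℂ) =ᵐ[volume] fun x => v (x - y) :=
  Lp.coeFn_compMeasurePreserving v _

lemma continuous_tau (v : H) : Continuous fun y : ℝ => (tau y v : H) := by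
  exact Continuous.compMeasurePreservingLp (f := fun _ : ℝ => v)
    (g := fun y : ℝ => (ContinuousMap.mk (fun p : ℝ × ℝ => p.2 - p.1) (by fun_prop)).curry y)
    continuous_const (ContinuousMap.continuous _)
    (fun y => measurePreserving_sub_right volume y) (by norm_num)

variable {J : ℝ → ℝ}

lemma integrand_integrable (hJ : Integrable J) (v : H) :
    Integrable (fun y : ℝ => J y • (tau y v : H)) volume := by
  have hm : AEStronglyMeasurable (fun y : ℝ => J y • (tau y v : H)) volume :=
    hJ.aestronglyMeasurable.smul (continuous_tau v).aestronglyMeasurable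
  refine (hJ.norm.mul_const ‖v‖).mono' hm (Eventually.of_forall fun y => ?_)
  rw [norm_smul, (tau y).norm_map]

def Tc (J : ℝ → ℝ) (hJ : Integrable J) : H →L[ℂ] H :=
  LinearMap.mkContinuous
    { toFun := fun v => ∫ y : ℝ, J y • (tau y v : H)
      map_add' := fun v w => by
        simp only [map_add, smul_add]
        exact integral_add (integrand_integrable hJ v) (integrand_integrable hJ w)
      map_smul' := fun c v => by
        simp only [_root_.map_smul, RingHom.id_apply]
        rw [← integral_smul]
        congr 1
        funext y
        rw [smul_comm] }
    (∫ y : ℝ, ‖J y‖)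
    (fun v => by
      refine (norm_integral_le_integral_norm _).trans ?_
      have : ∀ y : ℝ, ‖J y • (tau y v : H)‖ = ‖J y‖ * ‖v‖ := fun y => by
        rw [norm_smul, (tau y).norm_map]
      simp only [this]
      rw [integral_mul_const])

lemma Tc_apply (hJ : Integrable J) (v : H) :
    Tc J hJ v = ∫ y : ℝ, J y • (tau y v : H) := rfl

lemma inner_Tc (hJ : Integrable J) (g v : H) :
    ⟪g, Tc J hJ v⟫ = ∫ y : ℝ, (J y : ℂ) * ⟪g, tau y v⟫ := by
  rw [Tc_apply]
  have := (ContinuousLinearMap.integral_comp_comm (innerSL ℂ g)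
    (integrand_integrable hJ v)).symm
  simp only [innerSL_apply_apply] at this
  rw [show (inner ℂ g (∫ (y : ℝ), J y • (tau y v : H)) : ℂ)
      = ∫ y : ℝ, inner ℂ g (J y • (tau y v : H)) from this]
  congr 1
  funext y
  rw [RCLike.real_smul_eq_coe_smul (K := ℂ), inner_smul_right]
  norm_num

lemma integral_norm_mul_le (f g : H) :
    ∫ x : ℝ, ‖f x‖ * ‖g x‖ ≤ ‖f‖ * ‖g‖ := by
  have hf : MemLp (fun x : ℝ => ‖f x‖) 2 volume := (Lp.memLp f).norm
  have hg : MemLp (fun x : ℝ => ‖g x‖) 2 volume := (Lp.memLp g).norm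
  set F : Lp ℝ 2 (volume : Measure ℝ) := hf.toLp _ with hF
  set G : Lp ℝ 2 (volume : Measure ℝ) := hg.toLp _ with hG
  have h1 : ∫ x : ℝ, ‖f x‖ * ‖g x‖ = @inner ℝ _ _ F G := by
    rw [L2.inner_def]
    refine integral_congr_ae ?_
    filter_upwards [hf.coeFn_toLp, hg.coeFn_toLp] with x h1 h2
    simp [hF, hG, h1, h2, RCLike.inner_apply, mul_comm]
  have h2 : @inner ℝ _ _ F G ≤ ‖F‖ * ‖G‖ := real_inner_le_norm F G
  have h3 : ‖F‖ = ‖f‖ := by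
    rw [hF, MemLp.toLp, Lp.norm_def, Lp.norm_def]
    congr 1
    rw [eLpNorm_congr_ae (AEEqFun.coeFn_mk _ _), eLpNorm_norm]
  have h4 : ‖G‖ = ‖g‖ := by
    rw [hG, MemLp.toLp, Lp.norm_def, Lp.norm_def]
    congr 1
    rw [eLpNorm_congr_ae (AEEqFun.coeFn_mk _ _), eLpNorm_norm]
  rw [h1]
  calc @inner ℝ _ _ F G ≤ ‖F‖ * ‖G‖ := h2
  _ = ‖f‖ * ‖g‖ := by rw [h3, h4]

lemma slice_integrable (g v : H) (y : ℝ) :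
    Integrable (fun x : ℝ => conj (g x) * v (x - y)) volume := by
  have h := L2.integrable_inner (𝕜 := ℂ) g (tau y v)
  refine (integrable_congr ?_).mp h
  filter_upwards [tau_coeFn y v] with x hx
  simp [RCLike.inner_apply, hx, mul_comm]

lemma prod_integrable (hJ : Integrable J) (g v : H) :
    Integrable (fun p : ℝ × ℝ => conj (g p.1) * ((J p.2 : ℂ) * v (p.1 - p.2)))
      (volume.prod volume) := by
  have hg' : AEStronglyMeasurable (fun x : ℝ => conj (g x)) volume :=
    RCLike.continuous_conj.comp_aestronglyMeasurable (Lp.aestronglyMeasurable g)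
  have hJ' : AEStronglyMeasurable (fun y : ℝ => (J y : ℂ)) volume :=
    Complex.continuous_ofReal.comp_aestronglyMeasurable hJ.aestronglyMeasurable
  have hv' : AEStronglyMeasurable (fun p : ℝ × ℝ => v (p.1 - p.2)) (volume.prod volume) := by
    exact (Lp.aestronglyMeasurable v).comp_quasiMeasurePreserving
      (Measure.quasiMeasurePreserving_fst.comp
        (measurePreserving_sub_prod volume volume).quasiMeasurePreserving)
  have hm : AEStronglyMeasurable
      (fun p : ℝ × ℝ => conj (g p.1) * ((J p.2 : ℂ) * v (p.1 - p.2)))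
      (volume.prod volume) := hg'.comp_fst.mul (hJ'.comp_snd.mul hv')
  rw [integrable_prod_iff' hm]
  constructor
  · refine Eventually.of_forall fun y => ?_
    have h := (slice_integrable g v y).const_mul ((J y : ℂ))
    refine h.congr (Eventually.of_forall fun x => ?_)
    ring
  · refine (hJ.norm.mul_const (‖g‖ * ‖v‖)).mono' hm.norm.prod_swap.integral_prod_right'
      (Eventually.of_forall fun y => ?_)
    have hnn : 0 ≤ ∫ x : ℝ, ‖conj (g x) * ((J y : ℂ) * v (x - y))‖ :=
      integral_nonneg fun x => norm_nonneg _
    rw [Real.norm_of_nonneg hnn]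
    have h1 : ∀ x : ℝ, ‖conj (g x) * ((J y : ℂ) * v (x - y))‖
        = ‖J y‖ * (‖g x‖ * ‖v (x - y)‖) := fun x => by
      simp [norm_mul, Complex.norm_real, Real.norm_eq_abs]; ring
    simp only [h1]
    rw [integral_const_mul]
    refine mul_le_mul_of_nonneg_left ?_ (norm_nonneg _)
    have h2 : ∫ x : ℝ, ‖g x‖ * ‖v (x - y)‖ = ∫ x : ℝ, ‖g x‖ * ‖(tau y v : ℝ → ℂ) x‖ := by
      refine integral_congr_ae ?_
      filter_upwards [tau_coeFn y v] with x hx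
      rw [hx]
    rw [h2]
    calc ∫ x : ℝ, ‖g x‖ * ‖(tau y v : ℝ → ℂ) x‖ ≤ ‖g‖ * ‖tau y v‖ :=
      integral_norm_mul_le g (tau y v)
    _ = ‖g‖ * ‖v‖ := by rw [(tau y).norm_map]

lemma inner_tau_eq (g v : H) (y : ℝ) :
    (⟪g, tau y v⟫ : ℂ) = ∫ x : ℝ, conj (g x) * v (x - y) := by
  rw [L2.inner_def]
  refine integral_congr_ae ?_
  filter_upwards [tau_coeFn y v] with x hx
  simp [RCLike.inner_apply, hx, mul_comm]

lemma Tc_eq (hJ : Integrable J) (v w : H)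
    (hw : (w : ℝ → ℂ) =ᵐ[volume] fun x => ∫ y : ℝ, (J (x - y) : ℂ) * v y) :
    Tc J hJ v = w := by
  refine ext_inner_left ℂ fun g => ?_
  rw [inner_Tc]
  have key : (⟪g, w⟫ : ℂ) = ∫ y : ℝ, (J y : ℂ) * ⟪g, tau y v⟫ := by
    calc (⟪g, w⟫ : ℂ) = ∫ x : ℝ, conj (g x) * w x := by
          rw [L2.inner_def]; exact integral_congr_ae
            (Eventually.of_forall fun x => by simp [RCLike.inner_apply, mul_comm])
    _ = ∫ x : ℝ, conj (g x) * ∫ y : ℝ, (J (x - y) : ℂ) * v y := by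
          refine integral_congr_ae ?_
          filter_upwards [hw] with x hx
          rw [hx]
    _ = ∫ x : ℝ, ∫ y : ℝ, conj (g x) * ((J (x - y) : ℂ) * v y) := by
          refine integral_congr_ae (Eventually.of_forall fun x => ?_)
          exact (integral_const_mul _ _).symm
    _ = ∫ x : ℝ, ∫ y : ℝ, conj (g x) * ((J y : ℂ) * v (x - y)) := by
          refine integral_congr_ae (Eventually.of_forall fun x => ?_)
          have h := integral_sub_left_eq_self
            (fun z : ℝ => conj (g x) * ((J (x - z) : ℂ) * v z)) volume x
          simp only [sub_sub_cancel] at h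
          exact h.symm
    _ = ∫ y : ℝ, ∫ x : ℝ, conj (g x) * ((J y : ℂ) * v (x - y)) :=
          integral_integral_swap (prod_integrable hJ g v)
    _ = ∫ y : ℝ, (J y : ℂ) * ⟪g, tau y v⟫ := by
          refine integral_congr_ae (Eventually.of_forall fun y => ?_)
          show _ = (J y : ℂ) * ⟪g, tau y v⟫
          rw [inner_tau_eq]
          rw [← integral_const_mul]
          refine integral_congr_ae (Eventually.of_forall fun x => ?_)
          ring
  rw [key]

lemma tau_tau (y : ℝ) (b : H) : tau y (tau (-y) b) = b := by
  refine Lp.ext ?_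
  have h1 : (tau y (tau (-y) b) : ℝ → ℂ) =ᵐ[volume] fun x => (tau (-y) b : ℝ → ℂ) (x - y) :=
    tau_coeFn y _
  have h2 : (tau (-y) b : ℝ → ℂ) =ᵐ[volume] fun z => b (z + y) := by
    filter_upwards [tau_coeFn (-y) b] with z hz
    rw [hz, sub_neg_eq_add]
  have h3 : (fun x : ℝ => (tau (-y) b : ℝ → ℂ) (x - y))
      =ᵐ[volume] fun x : ℝ => b (x - y + y) :=
    (measurePreserving_sub_right volume y).quasiMeasurePreserving.ae_eq h2
  refine (h1.trans (h3.trans ?_))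
  simp only [sub_add_cancel]
  exact Eventually.of_forall fun x => rfl

lemma tau_inner (y : ℝ) (a b : H) : (⟪tau y a, b⟫ : ℂ) = ⟪a, tau (-y) b⟫ := by
  conv_lhs => rw [← tau_tau y b]
  exact (tau y).inner_map_map a (tau (-y) b)

lemma Tc_selfAdjoint (hJ : Integrable J) (hJeven : ∀ x, J (-x) = J x) (a b : H) :
    (⟪Tc J hJ a, b⟫ : ℂ) = ⟪a, Tc J hJ b⟫ := by
  rw [← inner_conj_symm, inner_Tc, ← integral_conj]
  have h1 : ∀ y : ℝ, conj ((J y : ℂ) * ⟪b, tau y a⟫) = (J y : ℂ) * ⟪tau y a, b⟫ := fun y => by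
    rw [map_mul, Complex.conj_ofReal, inner_conj_symm]
  simp only [h1, tau_inner]
  rw [inner_Tc]
  calc ∫ y : ℝ, (J y : ℂ) * ⟪a, tau (-y) b⟫
      = ∫ y : ℝ, (J (-y) : ℂ) * ⟪a, tau (-y) b⟫ := by
        refine integral_congr_ae (Eventually.of_forall fun y => ?_)
        show (J y : ℂ) * _ = (J (-y) : ℂ) * _
        rw [hJeven]
    _ = ∫ y : ℝ, (J y : ℂ) * ⟪a, tau y b⟫ :=
        integral_neg_eq_self (fun y : ℝ => (J y : ℂ) * ⟪a, tau y b⟫) volume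

lemma re_symm (a b : H) : (⟪a, b⟫ : ℂ).re = (⟪b, a⟫ : ℂ).re := by
  rw [← inner_conj_symm a b, Complex.conj_re]

lemma hasDerivAt_re {f : ℝ → ℂ} {f' : ℂ} {t : ℝ} (h : HasDerivAt f f' t) :
    HasDerivAt (fun s => (f s).re) f'.re t :=
  Complex.reCLM.hasFDerivAt.comp_hasDerivAt t h

end PeriAux


open PeriAux in
/-- Conservation of energy for the peridynamic evolution:
if `u : ℝ → L²(ℝ, ℂ)` is twice continuously differentiable and satisfies
`u'' + μ₀ u = J ⋆ u` (pointwise a.e., with `μ₀ = ∫ J`, `J` integrable, real and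
even), then the energy
`E(t) = ‖u'(t)‖² + μ₀ ‖u(t)‖² − ⟪J ⋆ u(t), u(t)⟫` is constant. -/
theorem peridynamics_energy_conservation
    (J : ℝ → ℝ) (hJ : Integrable J) (hJeven : ∀ x, J (-x) = J x)
    (u : ℝ → Lp ℂ 2 (volume : Measure ℝ)) (hu : ContDiff ℝ 2 u)
    (heq : ∀ t : ℝ, ∀ᵐ x : ℝ ∂volume,
      (deriv (deriv u) t) x + ((∫ y : ℝ, J y : ℝ) : ℂ) * (u t) x
        = ∫ y : ℝ, (J (x - y) : ℂ) * (u t) y) :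
    ∀ t₁ t₂ : ℝ,
      ‖deriv u t₁‖ ^ 2 + (∫ y : ℝ, J y) * ‖u t₁‖ ^ 2
          - (∫ x : ℝ, (∫ y : ℝ, (J (x - y) : ℂ) * (u t₁) y)
              * (starRingEnd ℂ) ((u t₁) x)).re
        = ‖deriv u t₂‖ ^ 2 + (∫ y : ℝ, J y) * ‖u t₂‖ ^ 2
          - (∫ x : ℝ, (∫ y : ℝ, (J (x - y) : ℂ) * (u t₂) y)
              * (starRingEnd ℂ) ((u t₂) x)).re := by
  intro t₁ t₂
  set μ₀ : ℝ := ∫ y : ℝ, J y with hμ₀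
  have hdu : Differentiable ℝ u := hu.differentiable (by norm_num)
  have hddu : Differentiable ℝ (deriv u) := by
    have h2 : ContDiff ℝ (1 + 1 : ℕ∞) u := by
      rw [one_add_one_eq_two]; exact hu
    exact (((contDiff_succ_iff_deriv (n := 1)).mp (by exact_mod_cast h2)).2.2).differentiable (by norm_num)
  have hTu : ∀ t : ℝ, Tc J hJ (u t) = deriv (deriv u) t + (μ₀ : ℂ) • u t := by
    intro t
    refine Tc_eq hJ _ _ ?_
    filter_upwards [heq t, Lp.coeFn_add (deriv (deriv u) t) ((μ₀ : ℂ) • u t),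
      Lp.coeFn_smul (μ₀ : ℂ) (u t)] with x h1 h2 h3
    rw [h2, Pi.add_apply, h3, Pi.smul_apply, smul_eq_mul]
    exact h1
  set F : ℝ → ℝ := fun t =>
    (⟪deriv u t, deriv u t⟫ : ℂ).re + μ₀ * (⟪u t, u t⟫ : ℂ).re
      - (⟪u t, Tc J hJ (u t)⟫ : ℂ).re with hF
  have hd : ∀ t : ℝ, HasDerivAt F 0 t := by
    intro t
    have hu1 : HasDerivAt u (deriv u t) t := (hdu t).hasDerivAt
    have hu2 : HasDerivAt (deriv u) (deriv (deriv u) t) t := (hddu t).hasDerivAt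
    have hTcirc : HasDerivAt (fun s => Tc J hJ (u s)) (Tc J hJ (deriv u t)) t :=
      ((Tc J hJ).restrictScalars ℝ).hasFDerivAt.comp_hasDerivAt t hu1
    have hI1 := HasDerivAt.inner ℂ hu2 hu2
    have hI2 := HasDerivAt.inner ℂ hu1 hu1
    have hI3 := HasDerivAt.inner ℂ hu1 hTcirc
    have hD := ((hasDerivAt_re hI1).add ((hasDerivAt_re hI2).const_mul μ₀)).sub
      (hasDerivAt_re hI3)
    have hzero :
        (⟪deriv u t, deriv (deriv u) t⟫ + ⟪deriv (deriv u) t, deriv u t⟫ : ℂ).re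
          + μ₀ * (⟪u t, deriv u t⟫ + ⟪deriv u t, u t⟫ : ℂ).re
          - (⟪u t, Tc J hJ (deriv u t)⟫ + ⟪deriv u t, Tc J hJ (u t)⟫ : ℂ).re = 0 := by
      have ha : (⟪u t, Tc J hJ (deriv u t)⟫ : ℂ)
          = ⟪deriv (deriv u) t, deriv u t⟫ + conj (μ₀ : ℂ) * ⟪u t, deriv u t⟫ := by
        rw [← Tc_selfAdjoint hJ hJeven (u t) (deriv u t), hTu t, inner_add_left,
          inner_smul_left]
      have hb : (⟪deriv u t, Tc J hJ (u t)⟫ : ℂ)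
          = ⟪deriv u t, deriv (deriv u) t⟫ + (μ₀ : ℂ) * ⟪deriv u t, u t⟫ := by
        rw [hTu t, inner_add_right, inner_smul_right]
      rw [ha, hb, Complex.conj_ofReal]
      have e1 : (⟪deriv (deriv u) t, deriv u t⟫ : ℂ).re
          = (⟪deriv u t, deriv (deriv u) t⟫ : ℂ).re := re_symm _ _
      have e2 : (⟪deriv u t, u t⟫ : ℂ).re = (⟪u t, deriv u t⟫ : ℂ).re := re_symm _ _
      simp only [Complex.add_re, Complex.mul_re, Complex.ofReal_re, Complex.ofReal_im,
        zero_mul, sub_zero, e1, e2]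
      ring
    rw [← hzero]
    exact hD
  have hconst : F t₁ = F t₂ :=
    is_const_of_deriv_eq_zero (fun t => (hd t).differentiableAt)
      (fun t => (hd t).deriv) t₁ t₂
  have hnorm : ∀ v : H, ‖v‖ ^ 2 = (⟪v, v⟫ : ℂ).re := fun v => by
    rw [@norm_sq_eq_re_inner ℂ, RCLike.re_to_complex]
  have hstmt : ∀ t : ℝ,
      (∫ x : ℝ, (∫ y : ℝ, (J (x - y) : ℂ) * (u t) y) * (starRingEnd ℂ) ((u t) x))
        = ⟪u t, Tc J hJ (u t)⟫ := by
    intro t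
    rw [L2.inner_def]
    symm
    have hc : (Tc J hJ (u t) : ℝ → ℂ)
        =ᵐ[volume] fun x => deriv (deriv u) t x + (μ₀ : ℂ) * (u t) x := by
      rw [hTu t]
      filter_upwards [Lp.coeFn_add (deriv (deriv u) t) ((μ₀ : ℂ) • u t),
        Lp.coeFn_smul (μ₀ : ℂ) (u t)] with x h2 h3
      rw [h2, Pi.add_apply, h3, Pi.smul_apply, smul_eq_mul]
    refine integral_congr_ae ?_
    filter_upwards [heq t, hc] with x h1 h2
    rw [RCLike.inner_apply, h2, h1]
  rw [hstmt t₁, hstmt t₂, hnorm (deriv u t₁), hnorm (deriv u t₂), hnorm (u t₁), hnorm (u t₂)]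
  exact hconst
end PeriAux
end

section
/- Let J : ℝ → ℝ be integrable, nonnegative, even, not almost everywhere zero, and suppose ∫ x²·J(x) dx < ∞. Define φ(ξ) = μ₀ − (𝓕J)(ξ). Then φ(0) = 0, φ is differentiable at 0 with φ'(0) = 0, φ(ξ) ≥ 0 for all ξ ∈ ℝ, and φ(ξ) > 0 for every ξ ≠ 0. -/
open MeasureTheory Real FourierTransform

/-- The `k`-th moment `μ_k = ∫ x^k J(x) dx` of `J`. -/
noncomputable def momentJ (J : ℝ → ℝ) (k : ℕ) : ℝ := ∫ x : ℝ, x ^ k * J x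

/-- `φ(ξ) = μ₀ − (𝓕J)(ξ)`; since `J` is real and even, `𝓕J` is real-valued,
so we record `φ` through the real part of the Fourier transform. -/
noncomputable def phiJ (J : ℝ → ℝ) (ξ : ℝ) : ℝ :=
  momentJ J 0 - (𝓕 (fun x : ℝ => (J x : ℂ)) ξ).re

/-- The wave speed `c = √(μ₂/2)`. -/
noncomputable def speedJ (J : ℝ → ℝ) : ℝ := Real.sqrt (momentJ J 2 / 2)

/-- `ψ(ξ) = sign(ξ)·√(2 φ(ξ)/φ''(0))`, where `φ''(0) = 4π²μ₂`. -/
noncomputable def psiJ (J : ℝ → ℝ) (ξ : ℝ) : ℝ :=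
  Real.sign ξ * Real.sqrt (2 * phiJ J ξ / (4 * Real.pi ^ 2 * momentJ J 2))

/-- `s(t,ξ) = sin(2πcψ(ξ)t)/(2πcψ(ξ))`, interpreted as `t` when `ψ(ξ) = 0`. -/
noncomputable def skerJ (J : ℝ → ℝ) (t ξ : ℝ) : ℝ :=
  if psiJ J ξ = 0 then t
  else Real.sin (2 * Real.pi * speedJ J * psiJ J ξ * t) / (2 * Real.pi * speedJ J * psiJ J ξ)

/-- The Fourier representation of the solution of `u_tt + μ₀ u = J ⋆ u` with
initial data `u(0,·) = u₀`, `∂ₜu(0,·) = u₁`. -/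
noncomputable def usolJ (J : ℝ → ℝ) (u₀ u₁ : SchwartzMap ℝ ℂ) (t x : ℝ) : ℂ :=
  ∫ ξ : ℝ, Complex.exp (2 * Real.pi * Complex.I * ξ * x) *
    ((Real.cos (2 * Real.pi * speedJ J * psiJ J ξ * t) : ℂ) * 𝓕 (u₀ : ℝ → ℂ) ξ
      + (skerJ J t ξ : ℂ) * 𝓕 (u₁ : ℝ → ℂ) ξ)

/-- The Fourier representation of `D u`, where `D` is the Fourier multiplier
with symbol `2πi ψ(ξ)`. -/
noncomputable def DusolJ (J : ℝ → ℝ) (u₀ u₁ : SchwartzMap ℝ ℂ) (t x : ℝ) : ℂ :=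
  ∫ ξ : ℝ, Complex.exp (2 * Real.pi * Complex.I * ξ * x) *
    (2 * Real.pi * Complex.I * (psiJ J ξ : ℂ)) *
    ((Real.cos (2 * Real.pi * speedJ J * psiJ J ξ * t) : ℂ) * 𝓕 (u₀ : ℝ → ℂ) ξ
      + (skerJ J t ξ : ℂ) * 𝓕 (u₁ : ℝ → ℂ) ξ)

lemma rePartAux (J : ℝ → ℝ) (hJint : Integrable J) (ξ : ℝ) :
    (𝓕 (fun x : ℝ => (J x : ℂ)) ξ).re = ∫ x : ℝ, Real.cos (2 * π * x * ξ) * J x := by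
  have hint : Integrable (fun v : ℝ => 𝐞 (-(v * ξ)) • (J v : ℂ)) :=
    by simpa [mul_comm] using (Real.fourierIntegral_convergent_iff (μ := volume) ξ).2 hJint.ofReal
  rw [Real.fourier_real_eq, ← RCLike.re_to_complex, ← integral_re hint]
  apply integral_congr_ae; filter_upwards with x
  simp only [Circle.smul_def, Real.fourierChar_apply, RCLike.re_to_complex, smul_eq_mul,
    Complex.mul_re, Complex.exp_ofReal_mul_I_re, Complex.ofReal_re, Complex.ofReal_im,
    mul_zero, sub_zero]
  rw [show 2 * π * -(x * ξ) = -(2 * π * x * ξ) by ring, Real.cos_neg]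

lemma cosInt (J : ℝ → ℝ) (hJint : Integrable J) (ξ : ℝ) :
    Integrable (fun x : ℝ => Real.cos (2 * π * x * ξ) * J x) := by
  apply hJint.bdd_mul
  · exact (Real.continuous_cos.comp (by continuity)).aestronglyMeasurable
  · exact Filter.Eventually.of_forall (fun x => (by simpa [Real.norm_eq_abs] using Real.abs_cos_le_one _ : ‖Real.cos (2 * π * x * ξ)‖ ≤ 1))

lemma phiJ_eq (J : ℝ → ℝ) (hJint : Integrable J) (ξ : ℝ) :
    phiJ J ξ = ∫ x : ℝ, (1 - Real.cos (2 * π * x * ξ)) * J x := by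
  have hm : momentJ J 0 = ∫ x : ℝ, J x := by simp [momentJ]
  rw [phiJ, hm, rePartAux J hJint ξ, ← integral_sub hJint (cosInt J hJint ξ)]
  apply integral_congr_ae; filter_upwards with x; ring


/-- Basic properties of the symbol `φ = μ₀ − 𝓕J`:
it vanishes to second order at the origin and is strictly positive away from it. -/
theorem phiJ_nonneg_and_positive
    (J : ℝ → ℝ) (hJint : Integrable J) (hJnonneg : ∀ x, 0 ≤ J x)
    (hJeven : ∀ x, J (-x) = J x) (hJne : ¬ (∀ᵐ x : ℝ ∂volume, J x = 0))
    (hmom2 : Integrable (fun x : ℝ => x ^ 2 * J x)) :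
    phiJ J 0 = 0 ∧ HasDerivAt (phiJ J) 0 0 ∧ (∀ ξ : ℝ, 0 ≤ phiJ J ξ) ∧
      ∀ ξ : ℝ, ξ ≠ 0 → 0 < phiJ J ξ := by
  have hnn : ∀ ξ : ℝ, 0 ≤ phiJ J ξ := by
    intro ξ
    rw [phiJ_eq J hJint ξ]
    apply integral_nonneg
    intro x
    have := Real.cos_le_one (2 * π * x * ξ)
    exact mul_nonneg (by linarith) (hJnonneg x)
  refine ⟨?_, ?_, hnn, ?_⟩
  · rw [phiJ_eq J hJint 0]; simp
  · -- derivative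
    have hx1 : Integrable (fun x : ℝ => x * J x) := by
      refine (hJint.abs.add hmom2.abs).mono'
        (aestronglyMeasurable_id.mul hJint.aestronglyMeasurable) ?_
      filter_upwards with x
      simp only [Real.norm_eq_abs, abs_mul, Pi.add_apply, abs_pow, sq_abs]
      nlinarith [abs_nonneg x, abs_nonneg (J x), sq_nonneg (|x| - 1), sq_abs x]
    have hxc : Integrable (fun x : ℝ => x • ((J x : ℂ))) := by
      have := hx1.ofReal (𝕜 := ℂ)
      apply this.congr
      filter_upwards with x
      push_cast
      rw [Complex.real_smul]
      norm_cast
    have hD := Real.hasDerivAt_fourier hJint.ofReal hxc 0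
    have hre : HasDerivAt (fun ξ : ℝ => (𝓕 (fun x : ℝ => (J x : ℂ)) ξ).re)
        ((𝓕 (fun x : ℝ => (-2 * π * Complex.I * x) • (J x : ℂ)) 0).re) 0 := by
      have := (Complex.reCLM.hasFDerivAt.comp (0 : ℝ) hD.hasFDerivAt).hasDerivAt
      simpa [Function.comp_def] using this
    have hval : (𝓕 (fun x : ℝ => (-2 * π * Complex.I * x) • (J x : ℂ)) 0).re = 0 := by
      have hg : Integrable (fun x : ℝ => (-2 * π * Complex.I * x) • (J x : ℂ)) := by
        have := hxc.smul ((-2) * (π : ℂ) * Complex.I)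
        apply this.congr
        filter_upwards with x
        simp [smul_smul]
        ring_nf
      have heq : (fun v : ℝ => 𝐞 (-(v * (0:ℝ))) • ((-2 * π * Complex.I * v) • (J v : ℂ)))
          = fun v : ℝ => (-2 * π * Complex.I * v) * (J v : ℂ) := by
        funext v
        simp [smul_eq_mul]
      rw [Real.fourier_real_eq, heq, ← RCLike.re_to_complex,
        ← integral_re (by simpa [smul_eq_mul] using hg)]
      simp [Complex.mul_re]
    have hc : HasDerivAt (fun _ : ℝ => momentJ J 0) 0 0 := hasDerivAt_const _ _
    have := hc.sub hre
    rw [hval, zero_sub, neg_zero] at this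
    exact this
  · intro ξ hξ
    rcases (hnn ξ).lt_or_eq with h | h
    · exact h
    exfalso
    have hf : Integrable (fun x : ℝ => (1 - Real.cos (2 * π * x * ξ)) * J x) := by
      apply (hJint.sub (cosInt J hJint ξ)).congr
      filter_upwards with x
      simp only [Pi.sub_apply]; ring
    have hzero : (fun x : ℝ => (1 - Real.cos (2 * π * x * ξ)) * J x) =ᵐ[volume] 0 := by
      refine (integral_eq_zero_iff_of_nonneg (fun x => ?_) hf).1 ?_
      · have := Real.cos_le_one (2 * π * x * ξ)
        exact mul_nonneg (by linarith) (hJnonneg x)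
      · rw [← phiJ_eq J hJint ξ]; exact h.symm
    have hS : volume {x : ℝ | Real.cos (2 * π * x * ξ) = 1} = 0 := by
      apply Set.Countable.measure_zero
      refine (Set.countable_range (fun n : ℤ => (n : ℝ) / ξ)).mono ?_
      intro x hx
      rcases (Real.cos_eq_one_iff _).1 hx with ⟨n, hn⟩
      refine ⟨n, ?_⟩
      have h2π : (2 * π : ℝ) ≠ 0 := by positivity
      have hnx : (n : ℝ) = x * ξ :=
        mul_right_cancel₀ h2π (hn.trans (by ring))
      show (n : ℝ) / ξ = x
      rw [hnx]
      exact mul_div_cancel_right₀ x hξ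
    apply hJne
    have hS' : ∀ᵐ x : ℝ ∂volume, x ∉ {x : ℝ | Real.cos (2 * π * x * ξ) = 1} :=
      measure_eq_zero_iff_ae_notMem.1 hS
    filter_upwards [hzero, hS'] with x h1 h2
    simp only [Pi.zero_apply, mul_eq_zero] at h1
    rcases h1 with h1 | h1
    · exact absurd (by linarith [sub_eq_zero.1 h1] : Real.cos (2 * π * x * ξ) = 1) h2
    · exact h1
end

section
/- Let l ≥ 0 be an integer, δ > 0, M > 0, and let s : ℝ → ℝ be (l+1)-times continuously differentiable with s'(ξ) ≥ δ for all ξ ∈ ℝ and |s^(k)(ξ)| ≤ M for all ξ ∈ ℝ and all 2 ≤ k ≤ l + 1. Then for every Schwartz function g ∈ 𝓢(ℝ, ℂ) there is a constant C such that |∫ g(ξ)·e^(2πi·t·s(ξ)) dξ| ≤ C·t^(−l) for all t > 0. -/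
open MeasureTheory Real Filter Topology

private lemma unif_bound {f : ℝ → ℂ} {n : ℕ} {w : ℝ → ℝ} (hw : ∀ x, 0 ≤ w x)
    (h : ∀ k, k ≤ n → ∃ C, ∀ x, ‖iteratedDeriv k f x‖ ≤ C * w x) :
    ∃ C, 0 ≤ C ∧ ∀ k, k ≤ n → ∀ x, ‖iteratedDeriv k f x‖ ≤ C * w x := by
  have h' : ∀ k, ∃ C, 0 ≤ C ∧ (k ≤ n → ∀ x, ‖iteratedDeriv k f x‖ ≤ C * w x) := by
    intro k
    by_cases hk : k ≤ n
    · obtain ⟨C, hC⟩ := h k hk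
      exact ⟨max C 0, le_max_right _ _, fun _ x =>
        (hC x).trans (mul_le_mul_of_nonneg_right (le_max_left _ _) (hw x))⟩
    · exact ⟨0, le_rfl, fun hk' => absurd hk' hk⟩
  choose C hC0 hC using h'
  refine ⟨∑ i ∈ Finset.range (n + 1), C i, Finset.sum_nonneg fun i _ => hC0 i,
    fun k hk x => (hC k hk x).trans (mul_le_mul_of_nonneg_right ?_ (hw x))⟩
  exact Finset.single_le_sum (f := C) (fun i _ => hC0 i)
    (Finset.mem_range.2 (Nat.lt_succ_of_le hk))

private lemma mul_bound {f g : ℝ → ℂ} {n : ℕ} {w : ℝ → ℝ} (hw : ∀ x, 0 ≤ w x)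
    (hf : ContDiff ℝ n f) (hg : ContDiff ℝ n g)
    (Hf : ∀ k, k ≤ n → ∃ C, ∀ x, ‖iteratedDeriv k f x‖ ≤ C * w x)
    (Hg : ∀ k, k ≤ n → ∃ C, ∀ x, ‖iteratedDeriv k g x‖ ≤ C) :
    ∀ k, k ≤ n → ∃ C, ∀ x, ‖iteratedDeriv k (fun x => f x * g x) x‖ ≤ C * w x := by
  obtain ⟨Cf, hCf0, hCf⟩ := unif_bound hw Hf
  obtain ⟨Cg, hCg0, hCg⟩ := unif_bound (w := fun _ => (1 : ℝ)) (fun _ => zero_le_one)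
    (fun k hk => (Hg k hk).imp fun C hC x => by simpa using hC x)
  intro k hk
  refine ⟨2 ^ k * Cf * Cg, fun x => ?_⟩
  rw [← norm_iteratedFDeriv_eq_norm_iteratedDeriv]
  have hcast : (k : WithTop ℕ∞) ≤ n := by exact_mod_cast hk
  calc ‖iteratedFDeriv ℝ k (fun y => f y * g y) x‖
      ≤ ∑ i ∈ Finset.range (k + 1),
          (k.choose i : ℝ) * ‖iteratedFDeriv ℝ i f x‖ * ‖iteratedFDeriv ℝ (k - i) g x‖ :=
        norm_iteratedFDeriv_mul_le hf hg x hcast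
    _ ≤ ∑ i ∈ Finset.range (k + 1), (k.choose i : ℝ) * (Cf * w x) * Cg := by
        refine Finset.sum_le_sum fun i hi => ?_
        have hi' : i ≤ n := le_trans (Nat.le_of_lt_succ (Finset.mem_range.1 hi)) hk
        have hki : k - i ≤ n := le_trans (Nat.sub_le _ _) hk
        have h1 : ‖iteratedFDeriv ℝ i f x‖ ≤ Cf * w x := by
          rw [norm_iteratedFDeriv_eq_norm_iteratedDeriv]; exact hCf i hi' x
        have h2 : ‖iteratedFDeriv ℝ (k - i) g x‖ ≤ Cg := by
          rw [norm_iteratedFDeriv_eq_norm_iteratedDeriv]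
          simpa using hCg (k - i) hki x
        have hcn : (0 : ℝ) ≤ (k.choose i : ℝ) := by positivity
        exact mul_le_mul (mul_le_mul_of_nonneg_left h1 hcn) h2 (norm_nonneg _)
          (mul_nonneg hcn (mul_nonneg hCf0 (hw x)))
    _ = (∑ i ∈ Finset.range (k + 1), (k.choose i : ℝ)) * ((Cf * w x) * Cg) := by
        rw [Finset.sum_mul]; exact Finset.sum_congr rfl fun i _ => by ring
    _ = 2 ^ k * Cf * Cg * w x := by
        have hsum : (∑ i ∈ Finset.range (k + 1), (k.choose i : ℝ)) = 2 ^ k := by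
          exact_mod_cast Nat.sum_range_choose k
        rw [hsum]; ring

private lemma inv_bound {f : ℝ → ℂ} {n : ℕ} {δ : ℝ} (hδ : 0 < δ)
    (hf : ContDiff ℝ n f) (hlow : ∀ x, δ ≤ ‖f x‖)
    (Hf : ∀ k, 1 ≤ k → k ≤ n → ∃ C, ∀ x, ‖iteratedDeriv k f x‖ ≤ C) :
    ∀ k, k ≤ n → ∃ C, ∀ x, ‖iteratedDeriv k (fun x => (f x)⁻¹) x‖ ≤ C := by
  have hne : ∀ x, f x ≠ 0 := fun x => norm_pos_iff.1 (lt_of_lt_of_le hδ (hlow x))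
  intro k
  induction k using Nat.strong_induction_on with
  | _ k ih =>
    intro hk
    obtain _ | m := k
    · refine ⟨δ⁻¹, fun x => ?_⟩
      rw [iteratedDeriv_zero, norm_inv]
      exact inv_anti₀ hδ (hlow x)
    · have hm1n : m + 1 ≤ n := hk
      have hmn : m ≤ n := Nat.le_of_succ_le hk
      have hfd : Differentiable ℝ f :=
        hf.differentiable (by exact_mod_cast (show n ≠ 0 by omega))
      have hfun : (fun x => (f x)⁻¹) = fun x => 1 / f x := by
        funext x; rw [one_div]
      have hderiv : deriv (fun x => (f x)⁻¹) =
          fun x => (-(deriv f x)) * ((f x)⁻¹ * (f x)⁻¹) := by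
        funext x
        have hfx : HasDerivAt f (deriv f x) x := (hfd x).hasDerivAt
        have hdiv := ((hasDerivAt_const x (1 : ℂ)).div hfx (hne x)).deriv
        rw [hfun, show (fun x => 1 / f x) = (fun _ => (1:ℂ)) / f from rfl, hdiv]
        field_simp
        ring
      have hdf : ContDiff ℝ m (deriv f) := by
        have h1 : ContDiff ℝ ((m : WithTop ℕ∞) + 1) f := by
          have := hf.of_le (show ((m + 1 : ℕ) : WithTop ℕ∞) ≤ n by exact_mod_cast hm1n)
          exact_mod_cast this
        exact (contDiff_succ_iff_deriv.mp h1).2.2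
      have hinv : ContDiff ℝ m fun x => (f x)⁻¹ :=
        (hf.inv hne).of_le (by exact_mod_cast hmn)
      have Hdf : ∀ j, j ≤ m → ∃ C, ∀ x,
          ‖iteratedDeriv j (fun x => -(deriv f x)) x‖ ≤ C * (fun _ : ℝ => (1:ℝ)) x := by
        intro j hj
        obtain ⟨C, hC⟩ := Hf (j + 1) (by omega) (by omega)
        refine ⟨C, fun x => ?_⟩
        rw [show (fun x => -(deriv f x)) = -(deriv f) from rfl, iteratedDeriv_neg, norm_neg, ← iteratedDeriv_succ']
        simpa using hC x
      have Hinv : ∀ j, j ≤ m → ∃ C, ∀ x,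
          ‖iteratedDeriv j (fun x => (f x)⁻¹) x‖ ≤ C :=
        fun j hj => ih j (Nat.lt_succ_of_le hj) (hj.trans hmn)
      have Hprod : ∀ j, j ≤ m → ∃ C, ∀ x,
          ‖iteratedDeriv j (fun x => (f x)⁻¹ * (f x)⁻¹) x‖ ≤ C := by
        have hmb := mul_bound (w := fun _ : ℝ => (1:ℝ)) (fun _ => zero_le_one)
          hinv hinv (fun j hj => (Hinv j hj).imp fun C hC x => by simpa using hC x) Hinv
        exact fun j hj => ((hmb j hj).imp fun C hC x => by simpa using hC x)
      obtain ⟨C, hC⟩ := mul_bound (w := fun _ : ℝ => (1:ℝ)) (fun _ => zero_le_one)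
        hdf.neg (hinv.mul hinv) Hdf Hprod m le_rfl
      refine ⟨C, fun x => ?_⟩
      rw [iteratedDeriv_succ', hderiv]
      simpa using hC x

/-- Non-stationary phase: if the phase `s` has derivative
bounded below by `δ > 0` and higher derivatives (up to order `l + 1`) bounded
by `M`, then for any Schwartz amplitude `g` the oscillatory integral
`∫ g(ξ) e^{2πi t s(ξ)} dξ` decays like `t^{-l}`. -/
theorem nonstationary_phase_decay
    (l : ℕ) (δ M : ℝ) (hδ : 0 < δ) (hM : 0 < M)
    (s : ℝ → ℝ) (hs : ContDiff ℝ (l + 1) s)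
    (hs' : ∀ ξ : ℝ, δ ≤ deriv s ξ)
    (hsk : ∀ k : ℕ, 2 ≤ k → k ≤ l + 1 → ∀ ξ : ℝ, |iteratedDeriv k s ξ| ≤ M)
    (g : SchwartzMap ℝ ℂ) :
    ∃ C : ℝ, ∀ t > (0 : ℝ),
      ‖∫ ξ : ℝ, g ξ * Complex.exp (2 * Real.pi * Complex.I * t * s ξ)‖
        ≤ C * t ^ (-(l : ℝ)) := by
  have hone : (1 : WithTop ℕ∞) ≤ ((l + 1 : ℕ) : WithTop ℕ∞) := by
    exact_mod_cast Nat.succ_le_succ (Nat.zero_le l)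
  have hsdiff : Differentiable ℝ s := hs.differentiable (by exact_mod_cast Nat.succ_ne_zero l)
  have hds : ContDiff ℝ l (deriv s) := by
    have hs2 : ContDiff ℝ ((l : WithTop ℕ∞) + 1) s := by exact_mod_cast hs
    exact (contDiff_succ_iff_deriv.mp hs2).2.2
  set f : ℝ → ℂ := fun x => ((deriv s x : ℝ) : ℂ) with hfdef
  have hfc : ContDiff ℝ l f := Complex.ofRealCLM.contDiff.comp hds
  have hflow : ∀ x, δ ≤ ‖f x‖ := fun x => by
    rw [hfdef]
    simp only [Complex.norm_real, Real.norm_eq_abs]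
    exact le_trans (hs' x) (le_abs_self _)
  have hfne : ∀ x, f x ≠ 0 := fun x => norm_pos_iff.1 (lt_of_lt_of_le hδ (hflow x))
  have hfderivnorm : ∀ k, k ≤ l → ∀ x,
      ‖iteratedDeriv k f x‖ = ‖iteratedDeriv k (deriv s) x‖ := by
    intro k hk x
    rw [← norm_iteratedFDeriv_eq_norm_iteratedDeriv, ← norm_iteratedFDeriv_eq_norm_iteratedDeriv]
    exact Complex.ofRealLI.norm_iteratedFDeriv_comp_left (x := x) hds.contDiffAt (by exact_mod_cast hk)
  have hfbd : ∀ k, 1 ≤ k → k ≤ l → ∃ C, ∀ x, ‖iteratedDeriv k f x‖ ≤ C := by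
    intro k h1 hk
    refine ⟨M, fun x => ?_⟩
    rw [hfderivnorm k hk x, ← iteratedDeriv_succ', Real.norm_eq_abs]
    exact hsk (k + 1) (by omega) (by omega) x
  set q : ℝ → ℂ := fun x => (f x)⁻¹ with hqdef
  have hqc : ContDiff ℝ l q := hfc.inv hfne
  have hqbd : ∀ k, k ≤ l → ∃ C, ∀ x, ‖iteratedDeriv k q x‖ ≤ C :=
    inv_bound hδ hfc hflow hfbd
  have hqnorm : ∀ x, ‖q x‖ ≤ δ⁻¹ := fun x => by
    rw [hqdef]; simp only [norm_inv]
    exact inv_anti₀ hδ (hflow x)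
  -- continuity of the oscillating factor
  have hEcont : ∀ t : ℝ, Continuous fun ξ : ℝ =>
      Complex.exp (2 * Real.pi * Complex.I * t * s ξ) :=
    fun t => Complex.continuous_exp.comp
      (continuous_const.mul (Complex.continuous_ofReal.comp hs.continuous))
  have hEnorm : ∀ (t : ℝ) (ξ : ℝ),
      ‖Complex.exp (2 * Real.pi * Complex.I * t * s ξ)‖ = 1 := by
    intro t ξ
    rw [Complex.norm_exp]
    have : (2 * (Real.pi : ℂ) * Complex.I * t * s ξ).re = 0 := by
      simp [Complex.mul_re, Complex.mul_im]
    rw [this, Real.exp_zero]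
  have hEd : ∀ (t : ℝ) (ξ : ℝ),
      HasDerivAt (fun ξ : ℝ => Complex.exp (2 * Real.pi * Complex.I * t * s ξ))
        (Complex.exp (2 * Real.pi * Complex.I * t * s ξ)
          * (2 * Real.pi * Complex.I * t * f ξ)) ξ := by
    intro t ξ
    have h1 : HasDerivAt (fun ξ : ℝ => ((s ξ : ℝ) : ℂ)) ((deriv s ξ : ℝ) : ℂ) ξ :=
      ((hsdiff ξ).hasDerivAt).ofReal_comp
    have h2 := h1.const_mul (2 * (Real.pi : ℂ) * Complex.I * t)
    have h3 := h2.cexp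
    simpa [hfdef, mul_assoc] using h3
  -- the key induction
  have key : ∀ n : ℕ, n ≤ l → ∀ h : ℝ → ℂ, ContDiff ℝ n h →
      (∀ k, k ≤ n → ∃ C, ∀ x, ‖iteratedDeriv k h x‖ ≤ C * (1 + x ^ 2)⁻¹) →
      ∃ C, 0 ≤ C ∧ ∀ t : ℝ, 0 < t →
        ‖∫ ξ : ℝ, h ξ * Complex.exp (2 * Real.pi * Complex.I * t * s ξ)‖
          ≤ C * t ^ (-(n : ℝ)) := by
    intro n
    induction n with
    | zero =>
      intro _ h hch Hh
      obtain ⟨B, hB⟩ := Hh 0 le_rfl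
      have hB' : ∀ x, ‖h x‖ ≤ B * (1 + x ^ 2)⁻¹ := fun x => by simpa using hB x
      have hBnn : 0 ≤ B := le_trans (norm_nonneg (h 0)) (by simpa using hB' 0)
      refine ⟨B * π, by positivity, fun t ht => ?_⟩
      simp only [Nat.cast_zero, neg_zero, Real.rpow_zero, mul_one]
      have hint : Integrable (fun ξ : ℝ => h ξ * Complex.exp (2 * Real.pi * Complex.I * t * s ξ)) := by
        refine (integrable_inv_one_add_sq.const_mul B).mono'
          ((hch.continuous.mul (hEcont t)).aestronglyMeasurable) ?_
        filter_upwards with x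
        rw [norm_mul, hEnorm t x, mul_one]
        exact hB' x
      calc ‖∫ ξ : ℝ, h ξ * Complex.exp (2 * Real.pi * Complex.I * t * s ξ)‖
          ≤ ∫ ξ : ℝ, ‖h ξ * Complex.exp (2 * Real.pi * Complex.I * t * s ξ)‖ := norm_integral_le_integral_norm _
        _ ≤ ∫ ξ : ℝ, B * (1 + ξ ^ 2)⁻¹ := by
            refine integral_mono hint.norm (integrable_inv_one_add_sq.const_mul B) fun x => ?_
            rw [norm_mul, hEnorm t x, mul_one]
            exact hB' x
        _ = B * π := by rw [integral_const_mul, integral_univ_inv_one_add_sq]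
    | succ n ihn =>
      intro hle h hch Hh
      have hnl : n ≤ l := Nat.le_of_succ_le hle
      have hqcn : ContDiff ℝ (n + 1 : ℕ) q := hqc.of_le (by exact_mod_cast hle)
      have hchq : ContDiff ℝ (n + 1 : ℕ) (fun x => h x * q x) := hch.mul hqcn
      set h₁ : ℝ → ℂ := deriv (fun x => h x * q x) with h1def
      have hh1c : ContDiff ℝ n h₁ := by
        have h2 : ContDiff ℝ ((n : WithTop ℕ∞) + 1) fun x => h x * q x := by exact_mod_cast hchq
        exact (contDiff_succ_iff_deriv.mp h2).2.2
      have Hmul := mul_bound (w := fun x : ℝ => (1 + x ^ 2)⁻¹)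
        (fun x => by positivity) hch hqcn Hh (fun k hk => hqbd k (hk.trans hle))
      have Hh1 : ∀ k, k ≤ n → ∃ C, ∀ x, ‖iteratedDeriv k h₁ x‖ ≤ C * (1 + x ^ 2)⁻¹ := by
        intro k hk
        obtain ⟨C, hC⟩ := Hmul (k + 1) (Nat.succ_le_succ hk)
        refine ⟨C, fun x => ?_⟩
        rw [h1def, ← iteratedDeriv_succ']
        exact hC x
      obtain ⟨C, hC0, hC⟩ := ihn hnl h₁ hh1c Hh1
      refine ⟨C / (2 * π), by positivity, fun t ht => ?_⟩
      have hhqd : ∀ ξ, HasDerivAt (fun x => h x * q x) (h₁ ξ) ξ := by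
        intro ξ
        have hd : Differentiable ℝ fun x => h x * q x :=
          hchq.differentiable (by simp)
        rw [h1def]
        exact (hd ξ).hasDerivAt
      have hqf : ∀ ξ, q ξ * f ξ = 1 := fun ξ => inv_mul_cancel₀ (hfne ξ)
      have hF : ∀ ξ, HasDerivAt
          (fun x => h x * q x * Complex.exp (2 * Real.pi * Complex.I * t * s x))
          (h₁ ξ * Complex.exp (2 * Real.pi * Complex.I * t * s ξ)
            + (2 * Real.pi * Complex.I * t) * (h ξ * Complex.exp (2 * Real.pi * Complex.I * t * s ξ))) ξ := by
        intro ξ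
        have hd' : HasDerivAt (fun x => h x * q x * Complex.exp (2 * Real.pi * Complex.I * t * s x))
            (h₁ ξ * Complex.exp (2 * Real.pi * Complex.I * t * s ξ)
              + (h ξ * q ξ) * (Complex.exp (2 * Real.pi * Complex.I * t * s ξ) * (2 * Real.pi * Complex.I * t * f ξ))) ξ :=
          (hhqd ξ).mul (hEd t ξ)
        have heq : h₁ ξ * Complex.exp (2 * Real.pi * Complex.I * t * s ξ)
            + (h ξ * q ξ) * (Complex.exp (2 * Real.pi * Complex.I * t * s ξ) * (2 * Real.pi * Complex.I * t * f ξ))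
            = h₁ ξ * Complex.exp (2 * Real.pi * Complex.I * t * s ξ)
            + (2 * Real.pi * Complex.I * t) * (h ξ * Complex.exp (2 * Real.pi * Complex.I * t * s ξ)) := by
          linear_combination (2 * (Real.pi : ℂ) * Complex.I * t * h ξ * Complex.exp (2 * Real.pi * Complex.I * t * s ξ)) * hqf ξ
        exact heq ▸ hd'
      obtain ⟨B, hB0, hB⟩ := unif_bound (w := fun x : ℝ => (1 + x ^ 2)⁻¹)
        (fun x => by positivity) Hh
      obtain ⟨B₁, hB10, hB1⟩ := unif_bound (w := fun x : ℝ => (1 + x ^ 2)⁻¹)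
        (fun x => by positivity) Hh1
      have hb : ∀ x, ‖h x‖ ≤ B * (1 + x ^ 2)⁻¹ := fun x => by
        simpa using hB 0 (Nat.zero_le _) x
      have hb1 : ∀ x, ‖h₁ x‖ ≤ B₁ * (1 + x ^ 2)⁻¹ := fun x => by
        simpa using hB1 0 (Nat.zero_le _) x
      have hint : Integrable (fun ξ : ℝ => h ξ * Complex.exp (2 * Real.pi * Complex.I * t * s ξ)) := by
        refine (integrable_inv_one_add_sq.const_mul B).mono'
          ((hch.continuous.mul (hEcont t)).aestronglyMeasurable) ?_
        filter_upwards with x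
        rw [norm_mul, hEnorm t x, mul_one]
        exact hb x
      have hint1 : Integrable (fun ξ : ℝ => h₁ ξ * Complex.exp (2 * Real.pi * Complex.I * t * s ξ)) := by
        refine (integrable_inv_one_add_sq.const_mul B₁).mono'
          ((hh1c.continuous.mul (hEcont t)).aestronglyMeasurable) ?_
        filter_upwards with x
        rw [norm_mul, hEnorm t x, mul_one]
        exact hb1 x
      have hF'int : Integrable (fun ξ : ℝ =>
          h₁ ξ * Complex.exp (2 * Real.pi * Complex.I * t * s ξ) + (2 * Real.pi * Complex.I * t) * (h ξ * Complex.exp (2 * Real.pi * Complex.I * t * s ξ))) :=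
        hint1.add (hint.const_mul _)
      have hFbound : ∀ x : ℝ, ‖h x * q x * Complex.exp (2 * Real.pi * Complex.I * t * s x)‖ ≤ (B * δ⁻¹) * (1 + x ^ 2)⁻¹ := by
        intro x
        rw [norm_mul, norm_mul, hEnorm t x, mul_one]
        calc ‖h x‖ * ‖q x‖ ≤ B * (1 + x ^ 2)⁻¹ * δ⁻¹ :=
              mul_le_mul (hb x) (hqnorm x) (norm_nonneg _)
                (mul_nonneg hB0 (by positivity))
          _ = (B * δ⁻¹) * (1 + x ^ 2)⁻¹ := by ring
      have hwtop : Tendsto (fun x : ℝ => (B * δ⁻¹) * (1 + x ^ 2)⁻¹) atTop (𝓝 0) := by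
        have h2 : Tendsto (fun x : ℝ => 1 + x ^ 2) atTop atTop :=
          tendsto_atTop_add_const_left _ 1 (tendsto_pow_atTop (by norm_num))
        have h3 := tendsto_inv_atTop_zero.comp h2
        simpa [Function.comp] using h3.const_mul (B * δ⁻¹)
      have hwbot : Tendsto (fun x : ℝ => (B * δ⁻¹) * (1 + x ^ 2)⁻¹) atBot (𝓝 0) := by
        have h4 := hwtop.comp tendsto_neg_atBot_atTop
        simpa [Function.comp_def, neg_sq] using h4
      have hFtop : Tendsto (fun x : ℝ => h x * q x * Complex.exp (2 * Real.pi * Complex.I * t * s x)) atTop (𝓝 0) :=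
        squeeze_zero_norm hFbound hwtop
      have hFbot : Tendsto (fun x : ℝ => h x * q x * Complex.exp (2 * Real.pi * Complex.I * t * s x)) atBot (𝓝 0) :=
        squeeze_zero_norm hFbound hwbot
      have t2 : ∀ R : ℝ, (∫ x in (-R)..R,
          (h₁ x * Complex.exp (2 * Real.pi * Complex.I * t * s x) + (2 * Real.pi * Complex.I * t) * (h x * Complex.exp (2 * Real.pi * Complex.I * t * s x))))
          = h R * q R * Complex.exp (2 * Real.pi * Complex.I * t * s R)
            - h (-R) * q (-R) * Complex.exp (2 * Real.pi * Complex.I * t * s (-R)) := fun R =>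
        intervalIntegral.integral_eq_sub_of_hasDerivAt (fun x _ => hF x)
          hF'int.intervalIntegrable
      have t1 : Tendsto (fun R : ℝ => ∫ x in (-R)..R,
          (h₁ x * Complex.exp (2 * Real.pi * Complex.I * t * s x) + (2 * Real.pi * Complex.I * t) * (h x * Complex.exp (2 * Real.pi * Complex.I * t * s x))))
          atTop (𝓝 (∫ x : ℝ,
            (h₁ x * Complex.exp (2 * Real.pi * Complex.I * t * s x) + (2 * Real.pi * Complex.I * t) * (h x * Complex.exp (2 * Real.pi * Complex.I * t * s x))))) :=
        intervalIntegral_tendsto_integral hF'int tendsto_neg_atTop_atBot tendsto_id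
      have t3 : Tendsto (fun R : ℝ => h R * q R * Complex.exp (2 * Real.pi * Complex.I * t * s R)
          - h (-R) * q (-R) * Complex.exp (2 * Real.pi * Complex.I * t * s (-R))) atTop (𝓝 0) := by
        have h5 := hFtop.sub (hFbot.comp tendsto_neg_atTop_atBot)
        simpa [Function.comp] using h5
      have hzero : (∫ x : ℝ,
          (h₁ x * Complex.exp (2 * Real.pi * Complex.I * t * s x) + (2 * Real.pi * Complex.I * t) * (h x * Complex.exp (2 * Real.pi * Complex.I * t * s x)))) = 0 := by
        have t1' := t1
        simp_rw [t2] at t1'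
        exact tendsto_nhds_unique t1' t3
      have hsplit : (∫ x : ℝ,
          (h₁ x * Complex.exp (2 * Real.pi * Complex.I * t * s x) + (2 * Real.pi * Complex.I * t) * (h x * Complex.exp (2 * Real.pi * Complex.I * t * s x))))
          = (∫ x : ℝ, h₁ x * Complex.exp (2 * Real.pi * Complex.I * t * s x))
            + (2 * Real.pi * Complex.I * t) * ∫ x : ℝ, h x * Complex.exp (2 * Real.pi * Complex.I * t * s x) := by
        rw [integral_add hint1 (hint.const_mul _), integral_const_mul]
      have hrel : (2 * Real.pi * Complex.I * t) * (∫ x : ℝ, h x * Complex.exp (2 * Real.pi * Complex.I * t * s x))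
          = -(∫ x : ℝ, h₁ x * Complex.exp (2 * Real.pi * Complex.I * t * s x)) := by
        rw [hsplit] at hzero
        linear_combination hzero
      have hnormc : ‖(2 * (Real.pi : ℂ) * Complex.I * (t : ℂ))‖ = 2 * π * t := by
        simp [norm_mul, Complex.norm_I, Complex.norm_real, Real.norm_eq_abs,
          abs_of_pos Real.pi_pos, abs_of_pos ht]
      have h2πt : (0 : ℝ) < 2 * π * t := by positivity
      have habs : ‖∫ x : ℝ, h x * Complex.exp (2 * Real.pi * Complex.I * t * s x)‖ * (2 * π * t)
          = ‖∫ x : ℝ, h₁ x * Complex.exp (2 * Real.pi * Complex.I * t * s x)‖ := by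
        have h6 := congrArg norm hrel
        rwa [norm_mul, hnormc, norm_neg, mul_comm] at h6
      have hle2 : ‖∫ x : ℝ, h x * Complex.exp (2 * Real.pi * Complex.I * t * s x)‖
          = ‖∫ x : ℝ, h₁ x * Complex.exp (2 * Real.pi * Complex.I * t * s x)‖ / (2 * π * t) := by
        rw [eq_div_iff (ne_of_gt h2πt)]
        exact habs
      calc ‖∫ x : ℝ, h x * Complex.exp (2 * Real.pi * Complex.I * t * s x)‖
          = ‖∫ x : ℝ, h₁ x * Complex.exp (2 * Real.pi * Complex.I * t * s x)‖ / (2 * π * t) := hle2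
        _ ≤ (C * t ^ (-(n : ℝ))) / (2 * π * t) := by
            gcongr
            exact hC t ht
        _ = C / (2 * π) * t ^ (-((n + 1 : ℕ) : ℝ)) := by
            have hexp : (-(((n + 1 : ℕ)) : ℝ)) = (-(n : ℝ)) + (-1) := by push_cast; ring
            rw [hexp, Real.rpow_add ht, Real.rpow_neg_one]
            field_simp
  -- apply to the Schwartz function
  have gsmooth : ContDiff ℝ l (⇑g) := (g.smooth ⊤).of_le (by exact_mod_cast le_top)
  have gdecay : ∀ k, k ≤ l → ∃ C, ∀ x, ‖iteratedDeriv k (⇑g) x‖ ≤ C * (1 + x ^ 2)⁻¹ := by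
    intro k _
    obtain ⟨C0, _, hC0⟩ := g.decay 0 k
    obtain ⟨C2, _, hC2⟩ := g.decay 2 k
    refine ⟨C0 + C2, fun x => ?_⟩
    have h1 : (0:ℝ) < 1 + x ^ 2 := by positivity
    rw [← norm_iteratedFDeriv_eq_norm_iteratedDeriv,
      show (C0 + C2) * (1 + x ^ 2)⁻¹ = (C0 + C2) / (1 + x ^ 2) from by ring,
      le_div_iff₀ h1]
    have e0 : ‖iteratedFDeriv ℝ k (⇑g) x‖ ≤ C0 := by simpa using hC0 x
    have e2 : x ^ 2 * ‖iteratedFDeriv ℝ k (⇑g) x‖ ≤ C2 := by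
      have := hC2 x
      rwa [Real.norm_eq_abs, sq_abs] at this
    nlinarith [norm_nonneg (iteratedFDeriv ℝ k (⇑g) x)]
  obtain ⟨C, _, hC⟩ := key l le_rfl (⇑g) gsmooth gdecay
  exact ⟨C, fun t ht => hC t ht⟩
end

section
/- Let u : ℂ → ℝ be harmonic on all of ℂ (identified with ℝ²) with u(0) = 0, and suppose there are constants a, b, d ≥ 0 such that for every R ≥ 2 the circle average satisfies (2πR)⁻¹ · ∫_{|ξ|=R} |u(ξ)| ds ≤ (a·R + b·log R + d)². Then u is a polynomial of degree at most 2 in the real coordinates: there exist real numbers c₁, c₂, c₃, c₄, c₅ such that u(x + iy) = c₁·x + c₂·y + c₃·x² + c₄·x·y + c₅·y² for all x, y ∈ ℝ. -/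
open MeasureTheory Real

lemma aux_expInt_hq (k : ℤ) : ∫ θ in (0:ℝ)..(2*π), Complex.exp (k * θ * Complex.I)
    = if k = 0 then (2*π : ℂ) else 0 := by
  rcases eq_or_ne k 0 with hk | hk
  · simp [hk, Complex.ofReal_mul]
  · rw [if_neg hk]
    have hc : (k : ℂ) * Complex.I ≠ 0 := by
      simp [Complex.I_ne_zero, Int.cast_eq_zero, hk]
    have harr : ∀ θ : ℝ, (k : ℂ) * θ * Complex.I = (k * Complex.I) * θ := by
      intro θ; ring
    simp_rw [harr]
    rw [integral_exp_mul_complex hc]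
    have h1 : (k : ℂ) * Complex.I * (2*π : ℝ) = (k : ℤ) * (2 * π * Complex.I) := by
      push_cast; ring
    rw [h1, Complex.exp_int_mul_two_pi_mul_I]
    simp

lemma aux_fourier_helper_hq (C : ℕ → ℂ) (k : ℕ → ℤ) (S : ℝ → ℂ)
    (hC : Summable fun m => ‖C m‖)
    (hS : ∀ θ : ℝ, HasSum (fun m => C m * Complex.exp (k m * θ * Complex.I)) (S θ)) :
    HasSum (fun m => C m * (if k m = 0 then (2*π:ℂ) else 0))
      (∫ θ in (0:ℝ)..(2*π), S θ) := by
  set μ := volume.restrict (Set.Ioc (0:ℝ) (2*π)) with hμ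
  set F : ℕ → ℝ → ℂ := fun m θ => C m * Complex.exp (k m * θ * Complex.I) with hF
  have hcont : ∀ m, Continuous (F m) := by
    intro m
    fun_prop
  have hint : ∀ m, Integrable (F m) μ := fun m => (hcont m).integrableOn_Ioc
  have hnorm : ∀ m θ, ‖F m θ‖ = ‖C m‖ := by
    intro m θ
    have : (k m : ℂ) * θ * Complex.I = ((k m * θ : ℝ) : ℂ) * Complex.I := by push_cast; ring
    rw [hF]
    simp only [norm_mul, this, Complex.norm_exp_ofReal_mul_I, mul_one]
  have hFsum : Summable fun m => ∫ θ, ‖F m θ‖ ∂μ := by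
    have : ∀ m, ∫ θ, ‖F m θ‖ ∂μ = (2*π) * ‖C m‖ := by
      intro m
      simp_rw [hnorm]
      rw [integral_const, hμ, measureReal_def, Measure.restrict_apply_univ, Real.volume_Ioc, smul_eq_mul]
      congr 1
      rw [ENNReal.toReal_ofReal (by rw [sub_zero]; positivity)]
      ring
    simp_rw [this]
    exact hC.mul_left _
  have H := hasSum_integral_of_summable_integral_norm hint hFsum
  have h2 : ∀ θ : ℝ, ∑' m, F m θ = S θ := fun θ => (hS θ).tsum_eq
  have h3 : ∫ θ, (∑' m, F m θ) ∂μ = ∫ θ in (0:ℝ)..(2*π), S θ := by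
    rw [intervalIntegral.integral_of_le (by positivity)]
    exact integral_congr_ae (Filter.Eventually.of_forall fun θ => h2 θ)
  rw [h3] at H
  have h4 : ∀ m, ∫ θ, F m θ ∂μ = C m * (if k m = 0 then (2*π:ℂ) else 0) := by
    intro m
    rw [hF]
    simp only []
    rw [integral_const_mul]
    congr 1
    rw [← aux_expInt_hq (k m), intervalIntegral.integral_of_le (by positivity)]
  simpa only [funext h4] using H

set_option maxHeartbeats 2000000 in
/-- A harmonic function on `ℂ ≅ ℝ²` vanishing at the origin
whose circle averages of `|u|` grow at most like `(aR + b log R + d)²` is a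
polynomial of degree at most 2 in the real coordinates. -/
theorem harmonic_quadratic_growth_is_quadratic_polynomial
    (u : ℂ → ℝ) (hu : ContDiff ℝ 2 u)
    (hharm : ∀ z : ℂ,
      iteratedFDeriv ℝ 2 u z ![1, 1] + iteratedFDeriv ℝ 2 u z ![Complex.I, Complex.I] = 0)
    (h0 : u 0 = 0)
    (a b d : ℝ) (ha : 0 ≤ a) (hb : 0 ≤ b) (hd : 0 ≤ d)
    (havg : ∀ R : ℝ, 2 ≤ R →
      (2 * Real.pi * R)⁻¹ *
          ∫ θ in (0 : ℝ)..(2 * Real.pi), |u (R * Complex.exp (θ * Complex.I))| * R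
        ≤ (a * R + b * Real.log R + d) ^ 2) :
    ∃ c₁ c₂ c₃ c₄ c₅ : ℝ, ∀ x y : ℝ,
      u (x + y * Complex.I)
        = c₁ * x + c₂ * y + c₃ * x ^ 2 + c₄ * x * y + c₅ * y ^ 2 := by
  -- ### Step 1 : the function `g = uₓ - i·u_y` is entire (Cauchy–Riemann)
  set D : ℂ → (ℂ →L[ℝ] ℝ) := fderiv ℝ u with hDdef
  have hud : Differentiable ℝ u := hu.differentiable (by norm_num)
  have hD : Differentiable ℝ D := (hu.fderiv_right (m := 1) le_rfl).differentiable (by norm_num)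
  set φ : (ℂ →L[ℝ] ℝ) →L[ℝ] ℂ :=
    Complex.ofRealCLM.comp (ContinuousLinearMap.apply ℝ ℝ (1 : ℂ))
      - Complex.I • (Complex.ofRealCLM.comp (ContinuousLinearMap.apply ℝ ℝ (Complex.I : ℂ)))
    with hφdef
  have hφ : ∀ T : ℂ →L[ℝ] ℝ, φ T = (T 1 : ℂ) - Complex.I * (T Complex.I : ℂ) := by
    intro T; simp [hφdef]
  set g : ℂ → ℂ := fun z => φ (D z) with hgdef
  have key : ∀ (T : ℂ →L[ℝ] ℂ) (w : ℂ), T w = w.re • T 1 + w.im • T Complex.I := by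
    intro T w
    have : w = w.re • (1 : ℂ) + w.im • Complex.I := by
      simp [Complex.real_smul, Complex.re_add_im]
    rw [← T.map_smul, ← T.map_smul, ← T.map_add, ← this]
  have hgdiff : ∀ z, HasFDerivAt g ((φ (fderiv ℝ D z 1)) • (1 : ℂ →L[ℂ] ℂ)) z := by
    intro z
    set B := fderiv ℝ D z with hBdef
    have hB : HasFDerivAt D B z := (hD z).hasFDerivAt
    have h1 : HasFDerivAt g (φ.comp B) z := φ.hasFDerivAt.comp z hB
    refine hasFDerivAt_of_restrictScalars ℝ h1 ?_
    have hsymm : ∀ v w, B v w = B w v :=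
      second_derivative_symmetric (fun y => (hud y).hasFDerivAt) hB
    have hlap : B 1 1 + B Complex.I Complex.I = 0 := by
      have := hharm z
      rwa [iteratedFDeriv_two_apply, iteratedFDeriv_two_apply] at this
    have hCR : φ (B Complex.I) = Complex.I * φ (B 1) := by
      rw [hφ, hφ]
      have h1 : B Complex.I 1 = B 1 Complex.I := hsymm _ _
      have h2 : B Complex.I Complex.I = -(B 1 1) := by linarith [hlap]
      rw [h1, h2]
      push_cast
      ring_nf
      rw [Complex.I_sq]
      ring
    ext w
    simp only [ContinuousLinearMap.coe_restrictScalars', ContinuousLinearMap.smul_apply,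
      ContinuousLinearMap.one_apply, ContinuousLinearMap.coe_comp', Function.comp_apply]
    have hBw : φ (B w) = w.re • φ (B 1) + w.im • φ (B Complex.I) := by
      have := key (φ.comp B) w
      simpa using this
    rw [hBw, hCR]
    simp only [Complex.real_smul, smul_eq_mul]
    linear_combination -φ (B 1) * Complex.re_add_im w
  have hgd : Differentiable ℂ g := fun z => (hgdiff z).differentiableAt
  have hgre : ∀ z, (g z).re = D z 1 := by
    intro z
    rw [hgdef]
    simp [hφ]
  have hgim : ∀ z, (g z).im = -(D z Complex.I) := by
    intro z
    rw [hgdef]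
    simp [hφ]
  -- ### Step 2 : Taylor coefficients of `g`
  set b' : ℕ → ℂ := fun n => (Nat.factorial n : ℂ)⁻¹ * iteratedDeriv n g 0 with hbdef
  have hgsum : ∀ z : ℂ, HasSum (fun n => b' n * z ^ n) (g z) := by
    intro z
    have := Complex.hasSum_taylorSeries_of_entire hgd 0 z
    simp only [sub_zero, smul_eq_mul] at this
    convert this using 2 with n
    · rfl
    · simp only [hbdef]; ring
  have hbsum : ∀ r : ℝ, 0 ≤ r → Summable (fun n => ‖b' n‖ * r ^ n) := by
    intro r hr
    have h1 : Summable (fun n => ‖b' n * (r : ℂ) ^ n‖) :=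
      summable_norm_iff.mpr (hgsum (r : ℂ)).summable
    convert h1 using 2 with n
    simp [abs_of_nonneg hr]
  -- ### Step 3 : the primitive `f` of `g` with `f 0 = 0`
  set A : ℕ → ℂ := fun n => Nat.rec 0 (fun m _ => b' m / (m + 1)) n with hAdef
  have hA0 : A 0 = 0 := rfl
  have hAs : ∀ m : ℕ, A (m + 1) = b' m / (m + 1) := fun m => rfl
  have hcast : ∀ m : ℕ, ((m : ℂ) + 1) ≠ 0 := by
    intro m
    exact_mod_cast Nat.cast_add_one_ne_zero (R := ℂ) m
  have hAb : ∀ m : ℕ, A (m + 1) * ((m : ℂ) + 1) = b' m := by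
    intro m
    rw [hAs, div_mul_cancel₀ _ (hcast m)]
  have hAnorm : ∀ m : ℕ, ‖A (m + 1)‖ * ((m : ℝ) + 1) = ‖b' m‖ := by
    intro m
    have h := congrArg norm (hAb m)
    rw [norm_mul] at h
    have : ‖(m : ℂ) + 1‖ = (m : ℝ) + 1 := by
      have : ((m : ℂ) + 1) = ((m + 1 : ℕ) : ℂ) := by push_cast; ring
      rw [this, Complex.norm_natCast]; push_cast; ring
    rwa [this] at h
  have hAle : ∀ m : ℕ, ‖A (m + 1)‖ ≤ ‖b' m‖ := by
    intro m
    rw [← hAnorm m]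
    nlinarith [norm_nonneg (A (m + 1)), Nat.cast_nonneg (α := ℝ) m]
  have hAsum : ∀ r : ℝ, 0 ≤ r → Summable (fun n => ‖A n‖ * r ^ n) := by
    intro r hr
    rw [← summable_nat_add_iff 1]
    refine Summable.of_nonneg_of_le (fun m => by positivity) (fun m => ?_)
      ((hbsum r hr).mul_right r)
    calc ‖A (m + 1)‖ * r ^ (m + 1) ≤ ‖b' m‖ * r ^ (m + 1) := by
          gcongr; exact hAle m
      _ = ‖b' m‖ * r ^ m * r := by ring
  have hsumA : ∀ z : ℂ, Summable (fun n => A n * z ^ n) :=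
    fun z => Summable.of_norm (by simpa using hAsum ‖z‖ (norm_nonneg z))
  set f : ℂ → ℂ := fun z => ∑' n, A n * z ^ n with hfdef
  have hfsum : ∀ z : ℂ, HasSum (fun n => A n * z ^ n) (f z) := fun z => (hsumA z).hasSum
  have hf0 : f 0 = 0 := by
    have h : (fun n => A n * (0 : ℂ) ^ n) = fun _ => (0 : ℂ) := by
      funext n; cases n <;> simp [hA0]
    simp only [hfdef, h, tsum_zero]
  have hfderiv : ∀ z : ℂ, HasDerivAt f (g z) z := by
    intro z
    have hR : (0 : ℝ) < ‖z‖ + 1 := by positivity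
    set U : ℕ → ℝ := fun n => ‖A n‖ * ((n : ℝ) * (‖z‖ + 1) ^ (n - 1)) with hUdef
    have hUeq : ∀ m : ℕ, U (m + 1) = ‖b' m‖ * (‖z‖ + 1) ^ m := by
      intro m
      have : U (m + 1) = ‖A (m + 1)‖ * ((m : ℝ) + 1) * (‖z‖ + 1) ^ m := by
        simp only [hUdef]; push_cast; ring
      rw [this, hAnorm]
    have hU : Summable U := by
      rw [← summable_nat_add_iff 1]
      simpa only [hUeq] using hbsum (‖z‖ + 1) hR.le
    have hder := hasDerivAt_tsum_of_isPreconnected hU Metric.isOpen_ball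
      (convex_ball (0 : ℂ) (‖z‖ + 1)).isPreconnected
      (g := fun n y => A n * y ^ n) (g' := fun n y => A n * ((n : ℂ) * y ^ (n - 1)))
      (fun n y _ => (hasDerivAt_pow n y).const_mul (A n))
      (fun n y hy => by
        rw [Metric.mem_ball, dist_zero_right] at hy
        simp only [hUdef, norm_mul, Complex.norm_natCast, norm_pow]
        gcongr)
      (Metric.mem_ball_self hR) (hsumA 0)
      (by rw [Metric.mem_ball, dist_zero_right]; linarith)
    have hs : HasSum (fun n => A n * ((n : ℂ) * z ^ (n - 1))) (g z) := by
      have h1 : HasSum (fun m => A (m + 1) * (((m + 1 : ℕ) : ℂ) * z ^ (m + 1 - 1))) (g z) := by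
        have : (fun m => A (m + 1) * (((m + 1 : ℕ) : ℂ) * z ^ (m + 1 - 1)))
            = fun m => b' m * z ^ m := by
          funext m
          rw [Nat.add_sub_cancel, ← hAb m]
          push_cast
          ring
        rw [this]
        exact hgsum z
      have := (hasSum_nat_add_iff (f := fun n => A n * ((n : ℂ) * z ^ (n - 1))) 1).mp h1
      simpa using this
    rwa [hs.tsum_eq] at hder
  have hfc : Continuous f :=
    continuous_iff_continuousAt.mpr fun z => (hfderiv z).continuousAt
  -- ### Step 4 : `u = Re f`
  have key' : ∀ (T : ℂ →L[ℝ] ℝ) (w : ℂ), T w = w.re * T 1 + w.im * T Complex.I := by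
    intro T w
    have hw : w = w.re • (1 : ℂ) + w.im • Complex.I := by
      simp [Complex.real_smul, Complex.re_add_im]
    calc T w = T (w.re • (1 : ℂ) + w.im • Complex.I) := by rw [← hw]
      _ = w.re * T 1 + w.im * T Complex.I := by
          rw [T.map_add, T.map_smul, T.map_smul]; simp [smul_eq_mul]
  have hure : ∀ z, u z = (f z).re := by
    set h : ℂ → ℝ := fun z => u z - (f z).re with hhdef
    have hzero : ∀ z, HasFDerivAt h (0 : ℂ →L[ℝ] ℝ) z := by
      intro z
      have h1 : HasFDerivAt f (ContinuousLinearMap.smulRight (1 : ℂ →L[ℂ] ℂ) (g z)) z :=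
        (hfderiv z).hasFDerivAt
      have h2 := Complex.reCLM.hasFDerivAt.comp z (h1.restrictScalars ℝ)
      have h3 := ((hud z).hasFDerivAt).sub h2
      have h4 : fderiv ℝ u z - Complex.reCLM.comp
          ((ContinuousLinearMap.smulRight (1 : ℂ →L[ℂ] ℂ) (g z)).restrictScalars ℝ) = 0 := by
        ext w
        simp only [ContinuousLinearMap.sub_apply, ContinuousLinearMap.coe_comp',
          Function.comp_apply, ContinuousLinearMap.coe_restrictScalars',
          ContinuousLinearMap.smulRight_apply, ContinuousLinearMap.one_apply,
          Complex.reCLM_apply, ContinuousLinearMap.zero_apply, smul_eq_mul]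
        rw [key' (fderiv ℝ u z) w, Complex.mul_re, ← hgre z]
        have : fderiv ℝ u z Complex.I = -(g z).im := by rw [hgim z]; ring
        rw [this]
        ring
      rwa [h4] at h3
    have hconst := is_const_of_fderiv_eq_zero (𝕜 := ℝ)
      (fun z => (hzero z).differentiableAt) (fun z => (hzero z).fderiv)
    intro z
    have := hconst z 0
    simp only [hhdef, hf0, h0, Complex.zero_re, sub_zero] at this
    linarith
  -- ### Step 5 : Fourier coefficient identity on circles
  have hcoeff : ∀ (n : ℕ), 1 ≤ n → ∀ (R : ℝ), 0 < R →
      ∫ θ in (0:ℝ)..(2*π), ((u (R * Complex.exp (θ * Complex.I)) : ℂ))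
          * Complex.exp (-(n:ℂ) * θ * Complex.I)
        = π * A n * R ^ n := by
    intro n hn R hR
    set e : ℝ → ℂ := fun θ => Complex.exp (-(n:ℂ) * θ * Complex.I) with hedef
    set w : ℝ → ℂ := fun θ => (R : ℂ) * Complex.exp (θ * Complex.I) with hwdef
    have hCsum : Summable fun m => ‖A m * (R:ℂ) ^ m‖ := by
      have := hAsum R hR.le
      refine this.congr fun m => ?_
      rw [norm_mul, norm_pow, Complex.norm_real, Real.norm_of_nonneg hR.le]
    have hS1 : ∀ θ : ℝ, HasSum
        (fun m => (A m * (R:ℂ) ^ m) * Complex.exp ((((m:ℤ) - n) : ℤ) * θ * Complex.I))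
        (f (w θ) * e θ) := by
      intro θ
      have h := (hfsum (w θ)).mul_right (e θ)
      have heq : (fun m => A m * (w θ) ^ m * e θ)
          = fun m => (A m * (R:ℂ) ^ m) * Complex.exp ((((m:ℤ) - n) : ℤ) * θ * Complex.I) := by
        funext m
        have h1 : Complex.exp (↑θ * Complex.I) ^ m
            = Complex.exp ((m : ℂ) * (↑θ * Complex.I)) := (Complex.exp_nat_mul _ m).symm
        have h2 : Complex.exp ((m:ℂ) * (↑θ * Complex.I)) * e θ
            = Complex.exp ((((m:ℤ) - n) : ℤ) * ↑θ * Complex.I) := by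
          rw [hedef, ← Complex.exp_add]
          congr 1
          push_cast
          ring
        calc A m * (w θ) ^ m * e θ
            = A m * (R:ℂ)^m * (Complex.exp (↑θ * Complex.I) ^ m * e θ) := by
              rw [hwdef, mul_pow]; ring
          _ = (A m * (R:ℂ)^m) * Complex.exp ((((m:ℤ) - n) : ℤ) * ↑θ * Complex.I) := by
              rw [h1, h2]
      rw [← heq]
      exact h
    have H1 := aux_fourier_helper_hq (fun m => A m * (R:ℂ)^m) (fun m => (m:ℤ) - n)
      (fun θ => f (w θ) * e θ) hCsum hS1
    have hfun1 : (fun m => (A m * (R:ℂ)^m) * (if ((m:ℤ) - n = 0) then (2*π:ℂ) else 0))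
        = fun m => if m = n then A n * (R:ℂ)^n * (2*π:ℂ) else 0 := by
      funext m
      by_cases h : m = n
      · subst h; simp
      · have h2 : ((m:ℤ) - n) ≠ 0 := by
          intro hc; exact h (by exact_mod_cast sub_eq_zero.mp hc)
        simp [h, h2]
    rw [hfun1] at H1
    have hI1 : A n * (R:ℂ)^n * (2*π:ℂ) = ∫ θ in (0:ℝ)..(2*π), f (w θ) * e θ :=
      (hasSum_ite_eq n _).unique H1
    have hCsum2 : Summable fun m => ‖(starRingEnd ℂ) (A m) * (R:ℂ) ^ m‖ := by
      refine hCsum.congr fun m => ?_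
      simp [norm_mul]
    have hS2 : ∀ θ : ℝ, HasSum
        (fun m => ((starRingEnd ℂ) (A m) * (R:ℂ) ^ m)
          * Complex.exp (((-((m:ℤ) + n)) : ℤ) * θ * Complex.I))
        ((starRingEnd ℂ) (f (w θ)) * e θ) := by
      intro θ
      have h := ((hfsum (w θ)).star).mul_right (e θ)
      have heq : (fun m => star (A m * (w θ) ^ m) * e θ)
          = fun m => ((starRingEnd ℂ) (A m) * (R:ℂ) ^ m)
            * Complex.exp (((-((m:ℤ) + n)) : ℤ) * θ * Complex.I) := by
        funext m
        have hconjw : star (w θ) = (R:ℂ) * Complex.exp (-(θ:ℂ) * Complex.I) := by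
          have h0' : star ((R:ℂ)) = (R:ℂ) := by
            rw [Complex.star_def, Complex.conj_ofReal]
          have h1 : star (Complex.exp (↑θ * Complex.I)) = Complex.exp (-(θ:ℂ) * Complex.I) := by
            rw [Complex.star_def, ← Complex.exp_conj]
            congr 1
            rw [map_mul, Complex.conj_ofReal, Complex.conj_I]
            ring
          rw [hwdef]
          simp only [star_mul']
          rw [h0', h1]
        have h1 : Complex.exp (-(θ:ℂ) * Complex.I) ^ m
            = Complex.exp ((m : ℂ) * (-(θ:ℂ) * Complex.I)) := (Complex.exp_nat_mul _ m).symm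
        have h2 : Complex.exp ((m:ℂ) * (-(θ:ℂ) * Complex.I)) * e θ
            = Complex.exp (((-((m:ℤ) + n)) : ℤ) * ↑θ * Complex.I) := by
          rw [hedef, ← Complex.exp_add]
          congr 1
          push_cast
          ring
        calc star (A m * (w θ) ^ m) * e θ
            = (starRingEnd ℂ) (A m) * (star (w θ)) ^ m * e θ := by
              rw [star_mul', star_pow]
              rfl
          _ = (starRingEnd ℂ) (A m) * (R:ℂ)^m
                * (Complex.exp (-(θ:ℂ) * Complex.I) ^ m * e θ) := by
              rw [hconjw, mul_pow]; ring
          _ = ((starRingEnd ℂ) (A m) * (R:ℂ)^m)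
                * Complex.exp (((-((m:ℤ) + n)) : ℤ) * ↑θ * Complex.I) := by
              rw [h1, h2]
      rw [← heq]
      exact h
    have H2 := aux_fourier_helper_hq (fun m => (starRingEnd ℂ) (A m) * (R:ℂ)^m)
      (fun m => -((m:ℤ) + n)) (fun θ => (starRingEnd ℂ) (f (w θ)) * e θ) hCsum2 hS2
    have hfun2 : (fun m => ((starRingEnd ℂ) (A m) * (R:ℂ)^m)
        * (if (-((m:ℤ) + n) = 0) then (2*π:ℂ) else 0)) = fun _ => (0:ℂ) := by
      funext m
      have h2 : -((m:ℤ) + n) ≠ 0 := by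
        have : (1:ℤ) ≤ n := by exact_mod_cast hn
        omega
      rw [if_neg h2, mul_zero]
    rw [hfun2] at H2
    have hI2 : (0:ℂ) = ∫ θ in (0:ℝ)..(2*π), (starRingEnd ℂ) (f (w θ)) * e θ :=
      hasSum_zero.unique H2
    have hsplit : ∀ θ : ℝ, ((u (w θ) : ℝ) : ℂ) * e θ
        = (f (w θ) * e θ + (starRingEnd ℂ) (f (w θ)) * e θ) / 2 := by
      intro θ
      have : ((u (w θ) : ℝ) : ℂ) = (f (w θ) + (starRingEnd ℂ) (f (w θ))) / 2 := by
        rw [hure (w θ), Complex.add_conj]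
        push_cast
        ring
      rw [this]
      ring
    have hec : Continuous e := by fun_prop
    have hwc : Continuous w := by fun_prop
    have hint1 : IntervalIntegrable (fun θ => f (w θ) * e θ) volume 0 (2*π) :=
      ((hfc.comp hwc).mul hec).intervalIntegrable _ _
    have hint2 : IntervalIntegrable (fun θ => (starRingEnd ℂ) (f (w θ)) * e θ) volume 0 (2*π) :=
      ((Complex.continuous_conj.comp (hfc.comp hwc)).mul hec).intervalIntegrable _ _
    calc ∫ θ in (0:ℝ)..(2*π), ((u (w θ) : ℝ) : ℂ) * e θ
        = ∫ θ in (0:ℝ)..(2*π),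
            (f (w θ) * e θ + (starRingEnd ℂ) (f (w θ)) * e θ) / 2 := by
          exact intervalIntegral.integral_congr fun θ _ => hsplit θ
      _ = (∫ θ in (0:ℝ)..(2*π),
            (f (w θ) * e θ + (starRingEnd ℂ) (f (w θ)) * e θ)) / 2 := by
          rw [intervalIntegral.integral_div]
      _ = ((∫ θ in (0:ℝ)..(2*π), f (w θ) * e θ)
            + ∫ θ in (0:ℝ)..(2*π), (starRingEnd ℂ) (f (w θ)) * e θ) / 2 := by
          rw [intervalIntegral.integral_add hint1 hint2]
      _ = π * A n * R ^ n := by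
          rw [← hI1, ← hI2]
          push_cast
          ring
  -- ### Step 6 : the growth bound kills all coefficients of degree ≥ 3
  have hbound : ∀ n : ℕ, 3 ≤ n → ∀ R : ℝ, 2 ≤ R → ‖A n‖ ≤ 2 * (a + b + d)^2 / R := by
    intro n hn R hR
    have hR0 : (0:ℝ) < R := by linarith
    have hR1 : (1:ℝ) ≤ R := by linarith
    have hid := hcoeff n (by omega) R hR0
    have hnormle : ‖∫ θ in (0:ℝ)..(2*π), ((u ((R:ℂ) * Complex.exp (θ * Complex.I)) : ℝ) : ℂ)
          * Complex.exp (-(n:ℂ) * θ * Complex.I)‖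
        ≤ ∫ θ in (0:ℝ)..(2*π), |u ((R:ℂ) * Complex.exp (θ * Complex.I))| := by
      refine le_trans (intervalIntegral.norm_integral_le_integral_norm (by positivity)) ?_
      refine le_of_eq (intervalIntegral.integral_congr fun θ _ => ?_)
      rw [norm_mul]
      have h2 : ‖Complex.exp (-(n:ℂ) * θ * Complex.I)‖ = 1 := by
        rw [Complex.norm_exp]
        have : (-(n:ℂ) * θ * Complex.I).re = 0 := by simp
        rw [this, Real.exp_zero]
      rw [h2, mul_one, Complex.norm_real, Real.norm_eq_abs]
    have havg' : ∫ θ in (0:ℝ)..(2*π), |u ((R:ℂ) * Complex.exp (θ * Complex.I))|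
        ≤ 2 * π * (a * R + b * Real.log R + d) ^ 2 := by
      have h := havg R hR
      rw [intervalIntegral.integral_mul_const] at h
      have hpos : (0:ℝ) < 2 * π * R := by positivity
      rw [inv_mul_le_iff₀ hpos] at h
      calc ∫ θ in (0:ℝ)..(2*π), |u ((R:ℂ) * Complex.exp (θ * Complex.I))|
          = ((∫ θ in (0:ℝ)..(2*π), |u ((R:ℂ) * Complex.exp (θ * Complex.I))|) * R) / R := by
            exact (mul_div_cancel_right₀ _ hR0.ne').symm
        _ ≤ (2 * π * R * (a * R + b * Real.log R + d) ^ 2) / R := by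
            exact (div_le_div_iff_of_pos_right hR0).mpr h
        _ = 2 * π * (a * R + b * Real.log R + d) ^ 2 := by field_simp
    have hnormval : ‖(π : ℂ) * A n * (R:ℂ) ^ n‖ = π * ‖A n‖ * R ^ n := by
      rw [norm_mul, norm_mul, norm_pow, Complex.norm_real, Complex.norm_real,
        Real.norm_of_nonneg Real.pi_pos.le, Real.norm_of_nonneg hR0.le]
    have hlogR : Real.log R ≤ R := by
      have := Real.log_le_sub_one_of_pos hR0
      linarith
    have hlin : a * R + b * Real.log R + d ≤ (a + b + d) * R := by
      have h1 : b * Real.log R ≤ b * R := by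
        apply mul_le_mul_of_nonneg_left hlogR hb
      nlinarith
    have hlinnn : 0 ≤ a * R + b * Real.log R + d := by
      have := Real.log_nonneg hR1
      positivity
    have hsq : (a * R + b * Real.log R + d) ^ 2 ≤ (a + b + d) ^ 2 * R ^ 2 := by
      calc (a * R + b * Real.log R + d) ^ 2 ≤ ((a + b + d) * R) ^ 2 := by
            exact pow_le_pow_left₀ hlinnn hlin 2
        _ = (a + b + d) ^ 2 * R ^ 2 := by ring
    have key1 : π * ‖A n‖ * R ^ n ≤ 2 * π * ((a + b + d) ^ 2 * R ^ 2) := by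
      rw [← hnormval]
      calc ‖(π : ℂ) * A n * (R:ℂ) ^ n‖
          = ‖∫ θ in (0:ℝ)..(2*π), ((u ((R:ℂ) * Complex.exp (θ * Complex.I)) : ℝ) : ℂ)
              * Complex.exp (-(n:ℂ) * θ * Complex.I)‖ := by rw [hid]
        _ ≤ ∫ θ in (0:ℝ)..(2*π), |u ((R:ℂ) * Complex.exp (θ * Complex.I))| := hnormle
        _ ≤ 2 * π * (a * R + b * Real.log R + d) ^ 2 := havg'
        _ ≤ 2 * π * ((a + b + d) ^ 2 * R ^ 2) := by
            apply mul_le_mul_of_nonneg_left hsq (by positivity)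
    have h3n : R ^ 3 ≤ R ^ n := pow_le_pow_right₀ hR1 hn
    have e1 : π * ‖A n‖ * R ^ 3 ≤ 2 * π * ((a + b + d) ^ 2 * R ^ 2) := by
      refine le_trans ?_ key1
      gcongr
    rw [le_div_iff₀ hR0]
    rw [← mul_le_mul_iff_of_pos_right (show (0:ℝ) < π * R ^ 2 by positivity)]
    calc ‖A n‖ * R * (π * R ^ 2) = π * ‖A n‖ * R ^ 3 := by ring
      _ ≤ 2 * π * ((a + b + d) ^ 2 * R ^ 2) := e1
      _ = 2 * (a + b + d) ^ 2 * (π * R ^ 2) := by ring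
  have hvan : ∀ n : ℕ, 3 ≤ n → A n = 0 := by
    intro n hn
    have ht : Filter.Tendsto (fun R : ℝ => 2 * (a + b + d) ^ 2 / R) Filter.atTop (nhds 0) :=
      Filter.Tendsto.div_atTop tendsto_const_nhds Filter.tendsto_id
    have hev : ∀ᶠ R : ℝ in Filter.atTop, ‖A n‖ ≤ 2 * (a + b + d) ^ 2 / R := by
      filter_upwards [Filter.eventually_ge_atTop 2] with R hR
      exact hbound n hn R hR
    have : ‖A n‖ ≤ 0 := ge_of_tendsto ht hev
    exact norm_le_zero_iff.mp this
  -- ### Step 7 : conclusion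
  refine ⟨(A 1).re, -(A 1).im, (A 2).re, -2*(A 2).im, -(A 2).re, ?_⟩
  intro x y
  set z : ℂ := x + y * Complex.I with hz
  have hfz : f z = A 1 * z + A 2 * z ^ 2 := by
    have h := (hfsum z).tsum_eq
    rw [← h, tsum_eq_sum (s := Finset.range 3) ?_]
    · simp [Finset.sum_range_succ, hA0]
    · intro n hn
      have h3 : 3 ≤ n := by
        rcases Finset.mem_range.not.mp hn with h
        omega
      rw [hvan n h3, zero_mul]
  rw [hure, hfz]
  have hre : z.re = x := by simp [hz]
  have him : z.im = y := by simp [hz]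
  simp only [pow_two, Complex.add_re, Complex.mul_re, Complex.mul_im, hre, him]
  ring
end

section
/- Let ν ∈ L¹(ℝ, ℂ). Suppose that for every Schwartz function χ ∈ 𝓢(ℝ, ℂ) the quantity ∫ (ν ⋆ χ)(x) · conj(χ(x)) dx is a nonnegative real number, where (ν ⋆ χ)(x) = ∫ ν(x−y)·χ(y) dy. Then the Fourier transform (𝓕ν)(ξ) = ∫ ν(x)·e^(−2πiξx) dx is a nonnegative real number for every ξ ∈ ℝ. -/
open MeasureTheory FourierTransform Filter Topology
open scoped Real

/-- A smooth compactly supported function is Schwartz. -/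
noncomputable def schwartzOfCompactSupport (f : ℝ → ℂ) (h1 : ContDiff ℝ ((⊤ : ℕ∞) : WithTop ℕ∞) f)
    (h2 : HasCompactSupport f) : SchwartzMap ℝ ℂ where
  toFun := f
  smooth' := h1
  decay' := by
    intro k n
    have hc : Continuous fun x : ℝ => ‖x‖ ^ k * ‖iteratedFDeriv ℝ n f x‖ :=
      (continuous_norm.pow k).mul (h1.continuous_iteratedFDeriv (mod_cast le_top)).norm
    have hs : HasCompactSupport fun x : ℝ => ‖x‖ ^ k * ‖iteratedFDeriv ℝ n f x‖ :=
      ((h2.iteratedFDeriv n).norm).mul_left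
    obtain ⟨C, hC⟩ := hc.bounded_above_of_compact_support hs
    refine ⟨C, fun x => ?_⟩
    have := hC x
    rwa [Real.norm_eq_abs, abs_of_nonneg (by positivity)] at this

/-- If convolution with `ν ∈ L¹(ℝ, ℂ)` is a positive operator
in the sense that `∫ (ν ⋆ χ) conj χ ≥ 0` for every Schwartz function `χ`, then
the Fourier transform of `ν` is real and nonnegative everywhere. -/
theorem fourierIntegral_nonneg_of_positive_convolution
    (ν : ℝ → ℂ) (hν : Integrable ν)
    (hpos : ∀ χ : SchwartzMap ℝ ℂ,
      (∫ x : ℝ, (∫ y : ℝ, ν (x - y) * χ y) * (starRingEnd ℂ) (χ x)).im = 0 ∧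
      0 ≤ (∫ x : ℝ, (∫ y : ℝ, ν (x - y) * χ y) * (starRingEnd ℂ) (χ x)).re) :
    ∀ ξ : ℝ, (𝓕 ν ξ).im = 0 ∧ 0 ≤ (𝓕 ν ξ).re := by
  classical
  have hmul_im : ∀ (r : ℝ) (z : ℂ), ((r : ℂ) * z).im = r * z.im := fun r z => by
    simp [Complex.mul_im]
  have hmul_re : ∀ (r : ℝ) (z : ℂ), ((r : ℂ) * z).re = r * z.re := fun r z => by
    simp [Complex.mul_re]
  intro ξ
  -- a fixed bump function
  set b : ContDiffBump (0 : ℝ) := ⟨1, 2, one_pos, one_lt_two⟩ with hbdef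
  set φ : ℝ → ℝ := fun x => b x with hφdef
  have hφcont : Continuous φ := b.continuous
  have hφsupp : HasCompactSupport φ := b.hasCompactSupport
  have hφint : Integrable φ := hφcont.integrable_of_hasCompactSupport hφsupp
  have hφnonneg : ∀ x, 0 ≤ φ x := fun x => b.nonneg
  have hφle1 : ∀ x, φ x ≤ 1 := fun x => b.le_one
  -- autocorrelation of the bump
  set B : ℝ → ℝ := fun v => ∫ t, φ (t - v) * φ t with hBdef
  have hBint : ∀ v : ℝ, Integrable (fun t => φ (t - v) * φ t) := by
    intro v
    refine Continuous.integrable_of_hasCompactSupport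
      ((hφcont.comp (continuous_sub_right v)).mul hφcont) ?_
    exact hφsupp.mul_left
  set M : ℝ := ∫ t, φ t with hMdef
  have hBbound : ∀ v, |B v| ≤ M := by
    intro v
    have habs : (fun t => |φ (t - v)| * |φ t|) = fun t => φ (t - v) * φ t :=
      funext fun t => by rw [abs_of_nonneg (hφnonneg _), abs_of_nonneg (hφnonneg _)]
    have h1 : |B v| ≤ ∫ t, |φ (t - v)| * |φ t| := by
      simpa [Real.norm_eq_abs] using
        norm_integral_le_integral_norm (fun t => φ (t - v) * φ t)
    refine h1.trans ?_
    rw [habs]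
    refine integral_mono (hBint v) hφint fun t => ?_
    calc φ (t - v) * φ t ≤ 1 * φ t :=
          mul_le_mul_of_nonneg_right (hφle1 _) (hφnonneg _)
      _ = φ t := one_mul _
  have hBcont : Continuous B := by
    rw [continuous_iff_continuousAt]
    intro v₀
    refine continuousAt_of_dominated (bound := φ) ?_ ?_ hφint ?_
    · exact Eventually.of_forall fun v =>
        ((hφcont.comp (continuous_sub_right v)).mul hφcont).aestronglyMeasurable
    · refine Eventually.of_forall fun v => Eventually.of_forall fun t => ?_
      rw [Real.norm_eq_abs, abs_of_nonneg (mul_nonneg (hφnonneg _) (hφnonneg _))]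
      calc φ (t - v) * φ t ≤ 1 * φ t :=
            mul_le_mul_of_nonneg_right (hφle1 _) (hφnonneg _)
        _ = φ t := one_mul _
    · refine Eventually.of_forall fun t => ?_
      exact ((hφcont.comp (continuous_const.sub continuous_id)).mul
        continuous_const).continuousAt
  have hB0 : 0 < B 0 := by
    have heq : B 0 = ∫ t, φ t * φ t := by
      simp only [hBdef, sub_zero]
    rw [heq]
    refine (integral_pos_iff_support_of_nonneg
      (fun t => mul_nonneg (hφnonneg t) (hφnonneg t)) ?_).mpr ?_
    · simpa [sub_zero] using hBint 0
    · have hss : Function.support (fun t => φ t * φ t) = Function.support φ := by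
        ext t; simp [Function.mem_support, mul_self_eq_zero]
      rw [hss, hφdef, b.support_eq]
      exact Metric.measure_ball_pos _ _ b.rOut_pos
  have hM0 : 0 ≤ M := le_trans (abs_nonneg _) (hBbound 0)
  -- the modulated rescaled bump, as a Schwartz function
  set E : ℝ → ℂ := fun u => Complex.exp (↑(-2 * π * u * ξ) * Complex.I) with hEdef
  have hEnorm : ∀ u, ‖E u‖ = 1 := fun u => Complex.norm_exp_ofReal_mul_I _
  have hEcont : Continuous E := by
    apply Complex.continuous_exp.comp
    exact (Complex.continuous_ofReal.comp (by fun_prop)).mul continuous_const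
  -- main quantity for parameter n : autocorrelation identity
  have key : ∀ n : ℕ,
      (∫ u, ν u * E u * ((B (u / ((n : ℝ) + 1)) : ℝ) : ℂ)).im = 0 ∧
      0 ≤ (∫ u, ν u * E u * ((B (u / ((n : ℝ) + 1)) : ℝ) : ℂ)).re := by
    intro n
    set R : ℝ := (n : ℝ) + 1 with hRdef
    have hR : 0 < R := by positivity
    set ψ : ℝ → ℂ := fun x =>
      Complex.exp (↑(2 * π * x * ξ) * Complex.I) * ((φ (x / R) : ℝ) : ℂ) with hψdef
    have hψsmooth : ContDiff ℝ ((⊤ : ℕ∞) : WithTop ℕ∞) ψ := by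
      have hlin : ContDiff ℝ ((⊤ : ℕ∞) : WithTop ℕ∞) fun x : ℝ => 2 * π * x * ξ :=
        (contDiff_const.mul contDiff_id).mul contDiff_const
      have h_exp : ContDiff ℝ ((⊤ : ℕ∞) : WithTop ℕ∞)
          fun x : ℝ => Complex.exp (↑(2 * π * x * ξ) * Complex.I) := by
        apply Complex.contDiff_exp.comp
        exact (Complex.ofRealCLM.contDiff.comp hlin).mul contDiff_const
      have h_phi : ContDiff ℝ ((⊤ : ℕ∞) : WithTop ℕ∞) fun x : ℝ => ((φ (x / R) : ℝ) : ℂ) :=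
        Complex.ofRealCLM.contDiff.comp (b.contDiff.comp (contDiff_id.div_const R))
      exact h_exp.mul h_phi
    have hφR_supp : HasCompactSupport fun x : ℝ => φ (x / R) := by
      have heq : (fun x : ℝ => φ (x / R)) =
          φ ∘ (Homeomorph.mulRight₀ R⁻¹ (inv_ne_zero hR.ne')) := by
        funext x
        simp [Homeomorph.mulRight₀, div_eq_mul_inv]
        rfl
      rw [heq]
      exact hφsupp.comp_homeomorph _
    have hψsupp : HasCompactSupport ψ := by
      have h1 : HasCompactSupport fun x : ℝ => ((φ (x / R) : ℝ) : ℂ) :=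
        hφR_supp.comp_left (g := Complex.ofReal) Complex.ofReal_zero
      exact h1.mul_left
    have hψcont : Continuous ψ := hψsmooth.continuous
    have hψint : Integrable ψ := hψcont.integrable_of_hasCompactSupport hψsupp
    set χ : SchwartzMap ℝ ℂ := schwartzOfCompactSupport ψ hψsmooth hψsupp with hχdef
    have hχfun : ∀ x, χ x = ψ x := fun x => rfl
    -- pointwise identity for the kernel
    have hkernel : ∀ x u : ℝ, ψ (x - u) * (starRingEnd ℂ) (ψ x) =
        E u * ((φ ((x - u) / R) * φ (x / R) : ℝ) : ℂ) := by
      intro x u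
      have hconj : (starRingEnd ℂ) (ψ x) =
          Complex.exp (-(↑(2 * π * x * ξ) * Complex.I)) * ((φ (x / R) : ℝ) : ℂ) := by
        rw [hψdef]
        simp only [map_mul, Complex.conj_ofReal]
        congr 1
        rw [← Complex.exp_conj]
        congr 1
        rw [map_mul, Complex.conj_ofReal, Complex.conj_I]
        ring
      rw [hψdef]
      simp only []
      rw [hconj]
      rw [mul_mul_mul_comm, ← Complex.exp_add, hEdef]
      have harg : (↑(2 * π * (x - u) * ξ) * Complex.I) + -(↑(2 * π * x * ξ) * Complex.I) =
          ↑(-2 * π * u * ξ) * Complex.I := by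
        push_cast
        ring
      rw [harg]
      push_cast
      ring
    -- integrability on the product space
    have hG : Integrable (fun p : ℝ × ℝ => ν p.2 * ψ (p.1 - p.2))
        (volume.prod volume) := by
      have := hν.convolution_integrand (ContinuousLinearMap.mul ℂ ℂ) hψint
      simpa using this
    obtain ⟨Cb, hCb⟩ := hψcont.bounded_above_of_compact_support hψsupp
    have hFint : Integrable
        (fun p : ℝ × ℝ => ν p.2 * ψ (p.1 - p.2) * (starRingEnd ℂ) (ψ p.1))
        (volume.prod volume) := by
      refine Integrable.mono' (hG.norm.const_mul Cb) ?_ ?_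
      · exact hG.aestronglyMeasurable.mul
          ((Complex.continuous_conj.comp (hψcont.comp continuous_fst)).aestronglyMeasurable)
      · refine Eventually.of_forall fun p => ?_
        rw [norm_mul, RCLike.norm_conj]
        calc ‖ν p.2 * ψ (p.1 - p.2)‖ * ‖ψ p.1‖
            ≤ ‖ν p.2 * ψ (p.1 - p.2)‖ * Cb := by
              gcongr
              exact hCb _
          _ = Cb * ‖ν p.2 * ψ (p.1 - p.2)‖ := mul_comm _ _
    -- the main computation
    have hQeq : (∫ x : ℝ, (∫ y : ℝ, ν (x - y) * ψ y) * (starRingEnd ℂ) (ψ x)) =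
        ∫ u, ν u * E u * (((R * B (u / R)) : ℝ) : ℂ) := by
      have hA : ∀ x : ℝ, (∫ y, ν (x - y) * ψ y) = ∫ u, ν u * ψ (x - u) := by
        intro x
        have h := integral_sub_left_eq_self (fun u => ν u * ψ (x - u)) volume x
        simpa using h
      calc (∫ x : ℝ, (∫ y : ℝ, ν (x - y) * ψ y) * (starRingEnd ℂ) (ψ x))
          = ∫ x : ℝ, ∫ u : ℝ, ν u * ψ (x - u) * (starRingEnd ℂ) (ψ x) := by
            refine integral_congr_ae (Eventually.of_forall fun x => ?_)
            show (∫ y, ν (x - y) * ψ y) * (starRingEnd ℂ) (ψ x) =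
              ∫ u, ν u * ψ (x - u) * (starRingEnd ℂ) (ψ x)
            rw [hA x]
            exact (integral_mul_const _ _).symm
        _ = ∫ u : ℝ, ∫ x : ℝ, ν u * ψ (x - u) * (starRingEnd ℂ) (ψ x) :=
            integral_integral_swap hFint
        _ = ∫ u, ν u * E u * (((R * B (u / R)) : ℝ) : ℂ) := by
            refine integral_congr_ae (Eventually.of_forall fun u => ?_)
            have hx1 : ∀ x : ℝ, ν u * ψ (x - u) * (starRingEnd ℂ) (ψ x) =
                ν u * (E u * ((φ ((x - u) / R) * φ (x / R) : ℝ) : ℂ)) := by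
              intro x
              rw [mul_assoc, hkernel x u]
            calc (∫ x : ℝ, ν u * ψ (x - u) * (starRingEnd ℂ) (ψ x))
                = ∫ x : ℝ, ν u * (E u * ((φ ((x - u) / R) * φ (x / R) : ℝ) : ℂ)) := by
                  exact integral_congr_ae (Eventually.of_forall hx1)
              _ = ν u * (E u * ((∫ x : ℝ, φ ((x - u) / R) * φ (x / R) : ℝ) : ℂ)) := by
                  rw [integral_const_mul, integral_const_mul]
                  congr 2
                  exact integral_ofReal
              _ = ν u * E u * (((R * B (u / R)) : ℝ) : ℂ) := by
                  have hscale : (∫ x : ℝ, φ ((x - u) / R) * φ (x / R)) = R * B (u / R) := by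
                    have heq2 : (fun x : ℝ => φ ((x - u) / R) * φ (x / R)) =
                        fun x : ℝ => (fun t => φ (t - u / R) * φ t) (x / R) := by
                      funext x
                      rw [sub_div]
                    rw [heq2, MeasureTheory.Measure.integral_comp_div
                      (fun t => φ (t - u / R) * φ t) R, abs_of_pos hR, smul_eq_mul]
                  rw [hscale, mul_assoc]
      -- end calc
    have hpχ := hpos χ
    simp only [hχfun] at hpχ
    rw [hQeq] at hpχ
    -- now divide by R
    have hRfactor : (∫ u, ν u * E u * (((R * B (u / R)) : ℝ) : ℂ)) =
        ((R : ℝ) : ℂ) * ∫ u, ν u * E u * ((B (u / R) : ℝ) : ℂ) := by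
      rw [← integral_const_mul]
      refine integral_congr_ae (Eventually.of_forall fun u => ?_)
      push_cast
      ring
    rw [hRfactor] at hpχ
    obtain ⟨him, hre⟩ := hpχ
    rw [hmul_im] at him
    rw [hmul_re] at hre
    constructor
    · have := mul_eq_zero.mp him
      rcases this with h | h
      · exact absurd h hR.ne'
      · exact h
    · nlinarith [hre, hR]
  -- pass to the limit
  set J : ℕ → ℂ := fun n => ∫ u, ν u * E u * ((B (u / ((n : ℝ) + 1)) : ℝ) : ℂ) with hJdef
  set L : ℂ := ∫ u, ν u * E u * ((B 0 : ℝ) : ℂ) with hLdef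
  have hJlim : Tendsto J atTop (𝓝 L) := by
    refine tendsto_integral_of_dominated_convergence (fun u => ‖ν u‖ * M) ?_ ?_ ?_ ?_
    · intro n
      refine (hν.1.mul hEcont.aestronglyMeasurable).mul ?_
      exact (Complex.continuous_ofReal.comp
        (hBcont.comp (continuous_id.div_const _))).aestronglyMeasurable
    · exact hν.norm.mul_const M
    · intro n
      refine Eventually.of_forall fun u => ?_
      rw [norm_mul, norm_mul, hEnorm, mul_one, Complex.norm_real, Real.norm_eq_abs]
      exact mul_le_mul_of_nonneg_left (hBbound _) (norm_nonneg _)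
    · refine Eventually.of_forall fun u => ?_
      have h1 : Tendsto (fun n : ℕ => u / ((n : ℝ) + 1)) atTop (𝓝 0) := by
        apply Tendsto.div_atTop (tendsto_const_nhds (x := u))
        exact tendsto_atTop_add_const_right atTop 1 tendsto_natCast_atTop_atTop
      have h2 : Tendsto (fun n : ℕ => B (u / ((n : ℝ) + 1))) atTop (𝓝 (B 0)) :=
        (hBcont.tendsto 0).comp h1
      have h3 : Tendsto (fun n : ℕ => ((B (u / ((n : ℝ) + 1)) : ℝ) : ℂ)) atTop
          (𝓝 ((B 0 : ℝ) : ℂ)) := (Complex.continuous_ofReal.tendsto _).comp h2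
      exact h3.const_mul (ν u * E u)
  have hLim : L.im = 0 := by
    have h1 : Tendsto (fun n => (J n).im) atTop (𝓝 L.im) :=
      (Complex.continuous_im.tendsto L).comp hJlim
    have h2 : (fun n => (J n).im) = fun _ => (0 : ℝ) := by
      funext n
      exact (key n).1
    rw [h2] at h1
    exact tendsto_nhds_unique h1 tendsto_const_nhds
  have hLre : 0 ≤ L.re := by
    have h1 : Tendsto (fun n => (J n).re) atTop (𝓝 L.re) :=
      (Complex.continuous_re.tendsto L).comp hJlim
    exact ge_of_tendsto' h1 fun n => (key n).2
  -- identify L with B 0 * 𝓕 ν ξ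
  have hLeq : L = ((B 0 : ℝ) : ℂ) * 𝓕 ν ξ := by
    rw [hLdef, Real.fourier_real_eq_integral_exp_smul, ← integral_const_mul]
    refine integral_congr_ae (Eventually.of_forall fun u => ?_)
    show ν u * E u * ((B 0 : ℝ) : ℂ) =
      ((B 0 : ℝ) : ℂ) * (Complex.exp (↑(-2 * π * u * ξ) * Complex.I) • ν u)
    rw [smul_eq_mul, hEdef]
    ring
  rw [hLeq] at hLim hLre
  rw [hmul_im] at hLim
  rw [hmul_re] at hLre
  constructor
  · rcases mul_eq_zero.mp hLim with h | h
    · exact absurd h hB0.ne'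
    · exact h
  · nlinarith [hLre, hB0]
end

section
/- For every nonzero complex number q, max(|q|, |q|⁻¹) ≤ max(√2, 2·|q + q⁻¹|). -/
lemma real_aux18 (r : ℝ) (hr : 0 < r) :
    max r r⁻¹ ≤ max (Real.sqrt 2) (2 * |r - r⁻¹|) := by
  have h2 : Real.sqrt 2 ^ 2 = 2 := Real.sq_sqrt (by norm_num)
  have hs : 0 < Real.sqrt 2 := Real.sqrt_pos.2 (by norm_num)
  have hr' : 0 < r⁻¹ := inv_pos.2 hr
  have hinv : r * r⁻¹ = 1 := mul_inv_cancel₀ hr.ne'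
  rcases le_total 1 r with h1 | h1
  · have hle : r⁻¹ ≤ r := by
      calc r⁻¹ ≤ 1 := inv_le_one_of_one_le₀ h1
      _ ≤ r := h1
    rw [max_eq_left hle]
    rcases le_or_gt r (Real.sqrt 2) with h | h
    · exact le_max_of_le_left h
    · refine le_max_of_le_right ?_
      rw [abs_of_nonneg (by linarith [inv_le_one_of_one_le₀ h1] : (0:ℝ) ≤ r - r⁻¹)]
      nlinarith [sq_nonneg (r - Real.sqrt 2)]
  · have hle : r ≤ r⁻¹ := by
      calc r ≤ 1 := h1
      _ ≤ r⁻¹ := (one_le_inv₀ hr).2 h1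
    rw [max_eq_right hle]
    rcases le_or_gt r⁻¹ (Real.sqrt 2) with h | h
    · exact le_max_of_le_left h
    · refine le_max_of_le_right ?_
      rw [abs_sub_comm, abs_of_nonneg (by linarith : (0:ℝ) ≤ r⁻¹ - r)]
      nlinarith [sq_nonneg (r⁻¹ - Real.sqrt 2)]

/-- For every nonzero complex `q`,
`max(|q|, |q|⁻¹) ≤ max(√2, 2|q + q⁻¹|)`. -/
theorem max_abs_le_of_sum_with_inv (q : ℂ) (hq : q ≠ 0) :
    max ‖q‖ ‖q‖⁻¹
      ≤ max (Real.sqrt 2) (2 * ‖q + q⁻¹‖) := by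
  have hr0 : 0 < ‖q‖ := norm_pos_iff.mpr hq
  have key : |‖q‖ - ‖q‖⁻¹| ≤ ‖q + q⁻¹‖ := by
    have := abs_norm_sub_norm_le q (-q⁻¹)
    simpa [norm_inv, sub_neg_eq_add] using this
  calc max ‖q‖ ‖q‖⁻¹
      ≤ max (Real.sqrt 2) (2 * |‖q‖ - ‖q‖⁻¹|) :=
        real_aux18 _ hr0
    _ ≤ max (Real.sqrt 2) (2 * ‖q + q⁻¹‖) :=
        max_le_max le_rfl (by linarith)
end
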